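/- arXiv:2505.04581 — 4 statements merged into one kernel-verified Lean document; each statement's English description precedes it below -/
import Mathlib

section
/- Let k be any field and m, n ≥ 0 with m+n ≥ 1. Every double coset in B(k)\GL_{m+n}(k)/K(k) contains a binary matrix, i.e. an invertible matrix every entry of which is either 0 or 1. -/
/-- A square matrix is upper triangular: every entry below the diagonal vanishes. -/
def IsUpperTriangular {N : ℕ} {k : Type*} [Field k] (g : Matrix (Fin N) (Fin N) k) : Prop :=
  ∀ i j : Fin N, (j : ℕ) < (i : ℕ) → g i j = 0

/-- A square matrix is block diagonal of type `(m, N - m)`: the entry at `(i,j)` vanishes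
whenever exactly one of `i`, `j` lies in the first `m` indices. -/
def IsBlockDiag (m : ℕ) {N : ℕ} {k : Type*} [Field k] (g : Matrix (Fin N) (Fin N) k) : Prop :=
  ∀ i j : Fin N, ¬(((i : ℕ) < m) ↔ ((j : ℕ) < m)) → g i j = 0



namespace BinCoset


variable {k : Type*} [Field k] {N : ℕ}

/-- binary vector -/
def Bin (x : Fin N → k) : Prop := ∀ i, x i = 0 ∨ x i = 1

/-- coordinate subspace: vectors supported on indices `< M` -/
def Esp (k : Type*) [Field k] (N M : ℕ) : Submodule k (Fin N → k) where
  carrier := {x | ∀ j : Fin N, M ≤ (j : ℕ) → x j = 0}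
  add_mem' := by intro a b ha hb j hj; simp only [Pi.add_apply, ha j hj, hb j hj, add_zero]
  zero_mem' := by intro j hj; rfl
  smul_mem' := by intro c x hx j hj; simp only [Pi.smul_apply, hx j hj, smul_zero]

lemma mem_Esp {x : Fin N → k} {M : ℕ} : x ∈ Esp k N M ↔ ∀ j : Fin N, M ≤ (j : ℕ) → x j = 0 :=
  Iff.rfl

lemma Esp_mono {M M' : ℕ} (h : M ≤ M') : Esp k N M ≤ Esp k N M' := by
  intro x hx j hj
  exact hx j (le_trans h hj)

/-- binary-spanned submodule -/
def BinSp (S : Submodule k (Fin N → k)) : Prop :=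
  S ≤ Submodule.span k {x | x ∈ S ∧ Bin x}

/-- upper triangular automorphism fixing `e_j` for `j ≥ M` -/
def Good (M : ℕ) (σ : (Fin N → k) ≃ₗ[k] (Fin N → k)) : Prop :=
  (∀ j i : Fin N, (j : ℕ) < (i : ℕ) → σ (Pi.single j 1) i = 0) ∧
  (∀ j : Fin N, M ≤ (j : ℕ) → σ (Pi.single j 1) = Pi.single j 1)

lemma expand (x : Fin N → k) : x = ∑ j : Fin N, x j • (Pi.single j 1 : Fin N → k) := by
  funext i
  rw [Finset.sum_apply]
  simp [Pi.single_apply, Finset.sum_ite_eq' Finset.univ i]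

lemma Good.mem_Esp_map {M : ℕ} {σ : (Fin N → k) ≃ₗ[k] (Fin N → k)} (hσ : Good M σ)
    {x : Fin N → k} (hx : x ∈ Esp k N M) : σ x ∈ Esp k N M := by
  intro i hi
  rw [expand x, map_sum]
  rw [Finset.sum_apply]
  apply Finset.sum_eq_zero
  intro j _
  rcases le_or_gt M (j : ℕ) with hj | hj
  · rw [hx j hj]; simp
  · rw [map_smul]
    have := hσ.1 j i (lt_of_lt_of_le hj hi)
    simp [this]



variable {k : Type*} [Field k] {N : ℕ}

section Tweak

variable (m0 : Fin N) (γ : k) (w : Fin N → k)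

/-- the linear map `x ↦ x + x m0 • v` -/
def addMap (v : Fin N → k) : (Fin N → k) →ₗ[k] (Fin N → k) :=
  LinearMap.id + (LinearMap.proj m0).smulRight v

lemma addMap_apply (v x : Fin N → k) : addMap m0 v x = x + x m0 • v := rfl

/-- the tweak automorphism: fixes `e_j` for `j ≠ m0`, sends `e_{m0} ↦ γ e_{m0} + w`. -/
noncomputable def tweak (hγ : γ ≠ 0) (hw : w m0 = 0) :
    (Fin N → k) ≃ₗ[k] (Fin N → k) := by
  refine LinearEquiv.ofLinear
    (addMap m0 ((γ - 1) • (Pi.single m0 1 : Fin N → k) + w))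
    (addMap m0 ((γ⁻¹ - 1) • (Pi.single m0 1 : Fin N → k) - γ⁻¹ • w)) ?_ ?_
  · apply LinearMap.ext; intro x
    simp only [LinearMap.comp_apply, addMap_apply, LinearMap.id_apply]
    have h1 : ((x + x m0 • ((γ⁻¹ - 1) • (Pi.single m0 1 : Fin N → k) - γ⁻¹ • w)) m0)
        = γ⁻¹ * x m0 := by
      simp [Pi.single_apply, hw]
      field_simp
      try ring
    rw [h1]
    funext i
    simp only [Pi.add_apply, Pi.smul_apply, Pi.sub_apply, Pi.single_apply, smul_eq_mul]
    rcases eq_or_ne i m0 with rfl | hne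
    · rw [hw]
      field_simp
      try ring
    · simp only [if_neg hne]
      field_simp
      try ring
  · apply LinearMap.ext; intro x
    simp only [LinearMap.comp_apply, addMap_apply, LinearMap.id_apply]
    have h1 : ((x + x m0 • ((γ - 1) • (Pi.single m0 1 : Fin N → k) + w)) m0)
        = γ * x m0 := by
      simp [Pi.single_apply, hw]
      ring
    rw [h1]
    funext i
    simp only [Pi.add_apply, Pi.smul_apply, Pi.sub_apply, Pi.single_apply, smul_eq_mul]
    rcases eq_or_ne i m0 with rfl | hne
    · rw [hw]
      field_simp
      try ring
    · simp only [if_neg hne]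
      field_simp
      try ring

lemma tweak_apply (hγ : γ ≠ 0) (hw : w m0 = 0) (x : Fin N → k) :
    tweak m0 γ w hγ hw x = x + x m0 • ((γ - 1) • (Pi.single m0 1 : Fin N → k) + w) := rfl

lemma tweak_fix (hγ : γ ≠ 0) (hw : w m0 = 0) (x : Fin N → k) (hx : x m0 = 0) :
    tweak m0 γ w hγ hw x = x := by
  rw [tweak_apply, hx]
  simp

end Tweak



lemma Bin_zero : Bin (0 : Fin N → k) := fun i => Or.inl rfl

lemma Bin_single (j : Fin N) : Bin (Pi.single j 1 : Fin N → k) := by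
  intro i
  rcases eq_or_ne i j with rfl | h
  · right; simp
  · left; simp [Pi.single_apply, h]

lemma Bin_single_add {y : Fin N → k} (m0 : Fin N) (hy : Bin y) (h0 : y m0 = 0) :
    Bin ((Pi.single m0 1 : Fin N → k) + y) := by
  intro i
  rcases eq_or_ne i m0 with rfl | h
  · right; simp [h0]
  · simpa [Pi.single_apply, h] using hy i

/-- first occurrence decomposition of a list with respect to a predicate -/
lemma list_first {α : Type*} (P : α → Prop) (D : List α) :
    (∀ x ∈ D, ¬ P x) ∨
    ∃ l₁ d l₂, D = l₁ ++ d :: l₂ ∧ P d ∧ ∀ x ∈ l₁, ¬ P x := by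
  classical
  induction D with
  | nil => left; simp
  | cons a D ih =>
    by_cases ha : P a
    · right; exact ⟨[], a, D, by simp, ha, by simp⟩
    · rcases ih with h | ⟨l₁, d, l₂, rfl, hd, hl₁⟩
      · left; intro x hx
        rcases List.mem_cons.1 hx with rfl | hx
        · exact ha
        · exact h x hx
      · right
        exact ⟨a :: l₁, d, l₂, by simp, hd, by
          intro x hx
          rcases List.mem_cons.1 hx with rfl | hx
          · exact ha
          · exact hl₁ x hx⟩

/-- trichotomy for two decompositions of a list -/
lemma list_tri {α : Type*} {L R l₁ l₂ : List α} {d₀ d : α}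
    (h : L ++ d₀ :: R = l₁ ++ d :: l₂) :
    (∃ M₂, L = l₁ ++ d :: M₂ ∧ l₂ = M₂ ++ d₀ :: R) ∨
    (L = l₁ ∧ d₀ = d ∧ R = l₂) ∨
    (∃ M₁, l₁ = L ++ d₀ :: M₁ ∧ R = M₁ ++ d :: l₂) := by
  rcases List.append_eq_append_iff.1 h with ⟨a', ha1, ha2⟩ | ⟨c', hc1, hc2⟩
  · -- l₁ = L ++ a', a' ++ d :: l₂ = d₀ :: R
    cases a' with
    | nil =>
      right; left
      simp only [List.nil_append] at ha2
      cases ha2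
      constructor
      · simpa using ha1.symm
      · exact ⟨rfl, rfl⟩
    | cons b a' =>
      right; right
      simp only [List.cons_append] at ha2
      cases ha2
      exact ⟨a', by simpa using ha1, rfl⟩
  · -- L = l₁ ++ c', c' ++ d₀ :: R = d :: l₂  (note: orientation)
    cases c' with
    | nil =>
      right; left
      simp only [List.nil_append] at hc2
      cases hc2
      exact ⟨by simpa using hc1, rfl, rfl⟩
    | cons b c' =>
      left
      simp only [List.cons_append] at hc2
      cases hc2
      exact ⟨c', by simpa using hc1, rfl⟩


/-- extension lemma for binary-spanned submodules -/
lemma BinSp.extend {S T : Submodule k (Fin N → k)} {β : Fin N → k}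
    (hS : BinSp S) (hST : S ≤ T) (hβbin : Bin β) (hβT : β ∈ T)
    (hT : T ≤ S ⊔ Submodule.span k {β}) : BinSp T := by
  intro x hx
  have h1 : S ⊔ Submodule.span k {β} ≤ Submodule.span k {x | x ∈ T ∧ Bin x} := by
    apply sup_le
    · refine le_trans hS (Submodule.span_mono ?_)
      intro y hy
      exact ⟨hST hy.1, hy.2⟩
    · rw [Submodule.span_le]
      intro y hy
      rw [Set.mem_singleton_iff] at hy
      subst hy
      exact Submodule.subset_span ⟨hβT, hβbin⟩
  exact h1 (hT hx)

/-- extraction of a normalized vector outside `Esp M` -/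
lemma extract {M : ℕ} (hMN : M < N) {U : Submodule k (Fin N → k)}
    (hU1 : U ≤ Esp k N (M + 1)) (hU2 : ¬ U ≤ Esp k N M) :
    ∃ u, u ∈ U ∧ u ⟨M, hMN⟩ = 1 ∧ (u - Pi.single ⟨M, hMN⟩ 1) ∈ Esp k N M := by
  rw [SetLike.not_le_iff_exists] at hU2
  obtain ⟨u', hu'U, hu'⟩ := hU2
  have hc : u' ⟨M, hMN⟩ ≠ 0 := by
    intro h0
    apply hu'
    intro j hj
    rcases eq_or_lt_of_le hj with he | hlt
    · have : j = ⟨M, hMN⟩ := by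
        apply Fin.ext
        exact he.symm
      rw [this]; exact h0
    · exact hU1 hu'U j hlt
  refine ⟨(u' ⟨M, hMN⟩)⁻¹ • u', Submodule.smul_mem _ _ hu'U, by
    simp [inv_mul_cancel₀ hc], ?_⟩
  intro j hj
  rcases eq_or_lt_of_le hj with he | hlt
  · have hje : j = ⟨M, hMN⟩ := by apply Fin.ext; exact he.symm
    subst hje
    simp [inv_mul_cancel₀ hc]
  · have h1 : u' j = 0 := hU1 hu'U j hlt
    have h2 : (Pi.single ⟨M, hMN⟩ 1 : Fin N → k) j = 0 := by
      apply Pi.single_eq_of_ne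
      intro hej
      rw [hej] at hlt
      simp at hlt
    simp [h1, h2]

/-- decomposition: if `u ∈ U` has `M`-th coordinate 1, then `U ≤ (U ⊓ Esp M) ⊔ span {u}` -/
lemma decomp {M : ℕ} (hMN : M < N) {U : Submodule k (Fin N → k)}
    (hU1 : U ≤ Esp k N (M + 1)) {u : Fin N → k} (hu : u ∈ U) (hu1 : u ⟨M, hMN⟩ = 1) :
    U ≤ (U ⊓ Esp k N M) ⊔ Submodule.span k {u} := by
  intro x hx
  have h1 : x - x ⟨M, hMN⟩ • u ∈ U ⊓ Esp k N M := by
    constructor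
    · exact Submodule.sub_mem _ hx (Submodule.smul_mem _ _ hu)
    · intro j hj
      rcases eq_or_lt_of_le hj with he | hlt
      · have hje : j = ⟨M, hMN⟩ := by apply Fin.ext; exact he.symm
        subst hje
        simp [hu1]
      · have := hU1 hx j hlt
        have h2 := hU1 hu j hlt
        simp [this, h2]
  have h2 : x = (x - x ⟨M, hMN⟩ • u) + x ⟨M, hMN⟩ • u := by ring_nf
  rw [h2]
  exact Submodule.add_mem _ (Submodule.mem_sup_left h1)
    (Submodule.mem_sup_right (Submodule.smul_mem _ _ (Submodule.subset_span rfl)))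


section GoodLemmas

lemma Good.weaken {M M' : ℕ} {σ : (Fin N → k) ≃ₗ[k] (Fin N → k)} (h : Good M σ)
    (hMM : M ≤ M') : Good M' σ :=
  ⟨h.1, fun j hj => h.2 j (le_trans hMM hj)⟩

lemma single_mem_Esp {j : Fin N} {M : ℕ} (h : (j : ℕ) < M) :
    (Pi.single j 1 : Fin N → k) ∈ Esp k N M := by
  intro i hi
  apply Pi.single_eq_of_ne
  intro hij
  subst hij
  omega

/-- a generic congruence for maps of submodules -/
lemma map_congr' {f g : (Fin N → k) ≃ₗ[k] (Fin N → k)} {T : Submodule k (Fin N → k)}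
    (h : ∀ x ∈ T, f x = g x) : T.map f.toLinearMap = T.map g.toLinearMap := by
  ext y
  simp only [Submodule.mem_map]
  constructor
  · rintro ⟨x, hx, rfl⟩; exact ⟨x, hx, (h x hx).symm⟩
  · rintro ⟨x, hx, rfl⟩; exact ⟨x, hx, h x hx⟩

variable {M : ℕ} (hMN : M < N) {σ' : (Fin N → k) ≃ₗ[k] (Fin N → k)}
  {γ : k} {w : Fin N → k} (hγ : γ ≠ 0) (hwE : w ∈ Esp k N M)

lemma wm0 (hwE : w ∈ Esp k N M) : w ⟨M, hMN⟩ = 0 := hwE ⟨M, hMN⟩ (by simp)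

/-- pointwise: the tweaked map agrees with `σ'` on `Esp M`. -/
lemma trans_tweak_fix (hσ' : Good M σ') {x : Fin N → k} (hx : x ∈ Esp k N M) :
    (σ'.trans (tweak ⟨M, hMN⟩ γ w hγ (wm0 hMN hwE))) x = σ' x := by
  rw [LinearEquiv.trans_apply]
  apply tweak_fix
  exact hσ'.mem_Esp_map hx ⟨M, hMN⟩ (by simp)

lemma map_trans_tweak (hσ' : Good M σ') {T : Submodule k (Fin N → k)} (hT : T ≤ Esp k N M) :
    T.map (σ'.trans (tweak ⟨M, hMN⟩ γ w hγ (wm0 hMN hwE))).toLinearMap = T.map σ'.toLinearMap :=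
  map_congr' (fun x hx => trans_tweak_fix hMN hγ hwE hσ' (hT hx))

lemma Good.trans_tweak (hσ' : Good M σ') :
    Good (M + 1) (σ'.trans (tweak ⟨M, hMN⟩ γ w hγ (wm0 hMN hwE))) := by
  constructor
  · intro j i hji
    rw [LinearEquiv.trans_apply]
    rcases lt_trichotomy (j : ℕ) M with hj | hj | hj
    · have h0 : (σ' (Pi.single j 1)) ⟨M, hMN⟩ = 0 := hσ'.1 j ⟨M, hMN⟩ (by simpa using hj)
      rw [tweak_fix _ _ _ _ _ _ h0]
      exact hσ'.1 j i hji
    · have hjm : j = ⟨M, hMN⟩ := by apply Fin.ext; simpa using hj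
      subst hjm
      rw [hσ'.2 _ (le_of_eq hj.symm)]
      rw [tweak_apply]
      have h1 : (Pi.single (⟨M, hMN⟩ : Fin N) 1 : Fin N → k) ⟨M, hMN⟩ = 1 := by simp
      have h2 : (Pi.single (⟨M, hMN⟩ : Fin N) 1 : Fin N → k) i = 0 := by
        apply Pi.single_eq_of_ne
        intro hij; subst hij; omega
      simp only [Pi.add_apply, Pi.smul_apply, h1, h2, smul_eq_mul, one_mul]
      rw [hwE i (by omega)]
      simp
    · have hfix : σ' (Pi.single j 1) = Pi.single j 1 := hσ'.2 j (le_of_lt hj)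
      rw [hfix]
      have h0 : (Pi.single j 1 : Fin N → k) ⟨M, hMN⟩ = 0 := by
        apply Pi.single_eq_of_ne
        intro hij
        rw [Fin.ext_iff] at hij
        try simp only [Fin.val_mk] at hij
        omega
      rw [tweak_fix _ _ _ _ _ _ h0]
      apply Pi.single_eq_of_ne
      intro hij
      rw [Fin.ext_iff] at hij
      try simp only [Fin.val_mk] at hij
      omega
  · intro j hj
    rw [LinearEquiv.trans_apply, hσ'.2 j (by omega)]
    apply tweak_fix
    apply Pi.single_eq_of_ne
    intro hij
    rw [Fin.ext_iff] at hij
    try simp only [Fin.val_mk] at hij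
    omega

end GoodLemmas


section KeyLemma

variable (k : Type*) [Field k] (N : ℕ)

/-- vanishing coordinate at `M` plus membership in `Esp (M+1)` pushes down -/
lemma step_down {k : Type*} [Field k] {N M : ℕ} (hMN : M < N) {x : Fin N → k}
    (hx : x ∈ Esp k N (M + 1)) (h0 : x ⟨M, hMN⟩ = 0) : x ∈ Esp k N M := by
  intro j hj
  rcases eq_or_lt_of_le hj with he | hlt
  · have : j = ⟨M, hMN⟩ := by apply Fin.ext; simp [← he]
    rw [this]; exact h0
  · exact hx j hlt

lemma sub_smul_mem_Esp {k : Type*} [Field k] {N M : ℕ} (hMN : M < N) {x u : Fin N → k} {c : k}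
    (hx : x ∈ Esp k N (M + 1)) (hu : u ∈ Esp k N (M + 1))
    (hc : x ⟨M, hMN⟩ - c * u ⟨M, hMN⟩ = 0) : x - c • u ∈ Esp k N M := by
  apply step_down hMN
  · exact Submodule.sub_mem _ hx (Submodule.smul_mem _ _ hu)
  · simpa using hc

/-- binary span extension along a tweak -/
lemma BinSp_step {k : Type*} [Field k] {N M : ℕ} (hMN : M < N)
    {σ σ' : (Fin N → k) ≃ₗ[k] (Fin N → k)}
    (hagree : ∀ x ∈ Esp k N M, σ x = σ' x)
    {U : Submodule k (Fin N → k)} (hUE : U ≤ Esp k N (M + 1))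
    {u : Fin N → k} (hu : u ∈ U) (hu1 : u ⟨M, hMN⟩ = 1)
    (hβ : Bin (σ u)) (hBS : BinSp ((U ⊓ Esp k N M).map σ'.toLinearMap)) : BinSp (U.map σ.toLinearMap) := by
  have hmapeq : (U ⊓ Esp k N M).map σ'.toLinearMap = (U ⊓ Esp k N M).map σ.toLinearMap :=
    (map_congr' (fun x hx => hagree x (Submodule.mem_inf.1 hx).2)).symm
  apply BinSp.extend (S := (U ⊓ Esp k N M).map σ'.toLinearMap) (β := σ u) hBS
  · rw [hmapeq]
    exact Submodule.map_mono inf_le_left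
  · exact hβ
  · exact Submodule.mem_map_of_mem hu
  · have h1 := decomp hMN hUE hu hu1
    have h2 := Submodule.map_mono (f := σ.toLinearMap) h1
    rw [Submodule.map_sup] at h2
    intro x hx
    have hx' : x ∈ Submodule.map σ.toLinearMap U := hx
    have h3 := h2 hx'
    rw [Submodule.map_span, Set.image_singleton] at h3
    rw [hmapeq]
    exact h3

lemma span_list_le {k : Type*} [Field k] {N : ℕ} {l : List (Fin N → k)}
    {T : Submodule k (Fin N → k)} (h : ∀ x ∈ l, x ∈ T) :
    Submodule.span k {x | x ∈ l} ≤ T := by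
  rw [Submodule.span_le]
  intro x hx
  exact h x hx

set_option maxHeartbeats 2000000 in
lemma key (M : ℕ) : M ≤ N → ∀ (U Z : Submodule k (Fin N → k)),
    U ≤ Esp k N M → Z ≤ Esp k N M →
    ∀ (D : List (Fin N → k)), (∀ d ∈ D, d ∈ Esp k N M) →
    ∃ σ : (Fin N → k) ≃ₗ[k] (Fin N → k), Good M σ ∧
      BinSp (U.map σ.toLinearMap) ∧ BinSp (Z.map σ.toLinearMap) ∧
      ∀ (l₁ : List (Fin N → k)) (d : Fin N → k) (l₂ : List (Fin N → k)),
        D = l₁ ++ d :: l₂ →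
        ∃ y y' : Fin N → k, Bin y ∧ Bin y' ∧ y ∈ Esp k N M ∧ y' ∈ Esp k N M ∧
          y' - y - σ d ∈ (U ⊔ Z ⊔ Submodule.span k {x | x ∈ l₁}).map σ.toLinearMap := by
  induction M with
  | zero =>
    intro _ U Z hU hZ D hD
    refine ⟨LinearEquiv.refl k _, ⟨?_, ?_⟩, ?_, ?_, ?_⟩
    · intro j i hji
      simp only [LinearEquiv.refl_apply]
      apply Pi.single_eq_of_ne
      intro hij; subst hij; omega
    · intro j _; rfl
    · intro x hx
      obtain ⟨x', hx', rfl⟩ := hx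
      have : x' = 0 := by
        funext j; exact hU hx' j (Nat.zero_le _)
      subst this
      simp only [map_zero]
      exact Submodule.zero_mem _
    · intro x hx
      obtain ⟨x', hx', rfl⟩ := hx
      have : x' = 0 := by
        funext j; exact hZ hx' j (Nat.zero_le _)
      subst this
      simp only [map_zero]
      exact Submodule.zero_mem _
    · intro l₁ d l₂ hsplit
      have hd : d = 0 := by
        funext j
        exact hD d (by rw [hsplit]; simp) j (Nat.zero_le _)
      refine ⟨0, 0, Bin_zero, Bin_zero, Submodule.zero_mem _, Submodule.zero_mem _, ?_⟩
      subst hd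
      simp only [map_zero, sub_zero, sub_self]
      exact Submodule.zero_mem _
  | succ M ih =>
    intro hM U Z hUE hZE D hDE
    have hMN : M < N := hM
    by_cases hU : U ≤ Esp k N M
    · by_cases hZ : Z ≤ Esp k N M
      · rcases list_first (fun x => x ⟨M, hMN⟩ ≠ 0) D with hall | ⟨L, d₀, R, hD0, hd₀, hL⟩
        · -- subcase A1 : no coordinate at M anywhere
          have hD : ∀ d ∈ D, d ∈ Esp k N M := fun d hd =>
            step_down hMN (hDE d hd) (not_not.1 (hall d hd))
          obtain ⟨σ', hG', hBU', hBZ', hR'⟩ := ih (by omega) U Z hU hZ D hD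
          refine ⟨σ', hG'.weaken (Nat.le_succ M), hBU', hBZ', ?_⟩
          intro l₁ d l₂ hsplit
          obtain ⟨y, y', h1, h2, h3, h4, h5⟩ := hR' l₁ d l₂ hsplit
          exact ⟨y, y', h1, h2, Esp_mono (Nat.le_succ M) h3, Esp_mono (Nat.le_succ M) h4, h5⟩
        · -- subcase A2
          have hδ : d₀ ⟨M, hMN⟩ ≠ 0 := hd₀
          have hd₀E : d₀ ∈ Esp k N (M + 1) := hDE d₀ (by rw [hD0]; simp)
          have hLsub : ∀ x ∈ L, x ∈ D := by intro x hx; rw [hD0]; simp [hx]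
          have hRsub : ∀ x ∈ R, x ∈ D := by intro x hx; rw [hD0]; simp [hx]
          have hLmem : ∀ x ∈ L, x ∈ Esp k N M := fun x hx =>
            step_down hMN (hDE x (hLsub x hx)) (not_not.1 (hL x hx))
          set r : (Fin N → k) → (Fin N → k) :=
            fun x => x - (x ⟨M, hMN⟩ * (d₀ ⟨M, hMN⟩)⁻¹) • d₀ with hr
          have hrE : ∀ x ∈ Esp k N (M + 1), r x ∈ Esp k N M := fun x hx =>
            sub_smul_mem_Esp hMN hx hd₀E (by field_simp; ring)
          have hD'mem : ∀ x ∈ L ++ R.map r, x ∈ Esp k N M := by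
            intro x hx
            rcases List.mem_append.1 hx with hx | hx
            · exact hLmem x hx
            · obtain ⟨xx, hxx, rfl⟩ := List.mem_map.1 hx
              exact hrE xx (hDE xx (hRsub xx hxx))
          obtain ⟨σ', hG', hBU', hBZ', hR'⟩ := ih (by omega) U Z hU hZ (L ++ R.map r) hD'mem
          set em : Fin N → k := Pi.single ⟨M, hMN⟩ 1 with hem
          have hemM : em ⟨M, hMN⟩ = 1 := by rw [hem]; simp
          have hem1 : em ∈ Esp k N (M + 1) := single_mem_Esp (by simp)
          set d₀' : Fin N → k := d₀ - d₀ ⟨M, hMN⟩ • em with hd₀'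
          have hd₀'E : d₀' ∈ Esp k N M :=
            sub_smul_mem_Esp hMN hd₀E hem1 (by rw [hemM, mul_one, sub_self])
          set w : Fin N → k := -((d₀ ⟨M, hMN⟩)⁻¹ • σ' d₀') with hw
          have hwE : w ∈ Esp k N M :=
            Submodule.neg_mem _ (Submodule.smul_mem _ _ (hG'.mem_Esp_map hd₀'E))
          have hγ : (d₀ ⟨M, hMN⟩)⁻¹ ≠ 0 := inv_ne_zero hδ
          set σ := σ'.trans (tweak ⟨M, hMN⟩ (d₀ ⟨M, hMN⟩)⁻¹ w hγ (wm0 hMN hwE)) with hσ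
          have hGood : Good (M + 1) σ := hG'.trans_tweak hMN hγ hwE
          have hagree : ∀ x ∈ Esp k N M, σ x = σ' x := fun x hx =>
            trans_tweak_fix hMN hγ hwE hG' hx
          have hem_fix : σ' em = em := hG'.2 _ (by simp)
          have hrecomb : d₀' + d₀ ⟨M, hMN⟩ • em = d₀ := by rw [hd₀']; abel
          have hsplit₀ : σ' d₀ = σ' d₀' + d₀ ⟨M, hMN⟩ • em := by
            conv_lhs => rw [← hrecomb, map_add, map_smul, hem_fix]
          have hcoord : (σ' d₀) ⟨M, hMN⟩ = d₀ ⟨M, hMN⟩ := by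
            rw [hsplit₀]
            have h0 : (σ' d₀') ⟨M, hMN⟩ = 0 := hG'.mem_Esp_map hd₀'E _ (by simp)
            simp [h0, hemM]
          have hσd₀ : σ d₀ = em := by
            rw [hσ, LinearEquiv.trans_apply, tweak_apply, hcoord, hsplit₀, hw, ← hem]
            match_scalars <;> field_simp <;> ring
          refine ⟨σ, hGood, ?_, ?_, ?_⟩
          · rw [show U.map σ.toLinearMap = U.map σ'.toLinearMap from map_congr' (fun x hx => hagree x (hU hx))]
            exact hBU'
          · rw [show Z.map σ.toLinearMap = Z.map σ'.toLinearMap from map_congr' (fun x hx => hagree x (hZ hx))]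
            exact hBZ'
          · intro l₁ d l₂ hsplit
            rcases list_tri (hD0.symm.trans hsplit) with ⟨M₂, hLa, hl₂a⟩ | ⟨hLa, hdd, hRR⟩ |
              ⟨M₁, hl₁c, hRc⟩
            · -- d occurs in L
              have hsplit' : L ++ R.map r = l₁ ++ d :: (M₂ ++ R.map r) := by rw [hLa]; simp
              obtain ⟨y, y', h1, h2, h3, h4, h5⟩ := hR' l₁ d _ hsplit'
              have hdM : d ∈ Esp k N M := hLmem d (by rw [hLa]; simp)
              have hl₁L : ∀ x ∈ l₁, x ∈ L := by intro x hx; rw [hLa]; simp [hx]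
              have hTE : U ⊔ Z ⊔ Submodule.span k {x | x ∈ l₁} ≤ Esp k N M :=
                sup_le (sup_le hU hZ) (span_list_le (fun x hx => hLmem x (hl₁L x hx)))
              refine ⟨y, y', h1, h2, Esp_mono (Nat.le_succ M) h3, Esp_mono (Nat.le_succ M) h4, ?_⟩
              rw [show σ d = σ' d from hagree d hdM,
                show (U ⊔ Z ⊔ Submodule.span k {x | x ∈ l₁}).map σ.toLinearMap
                  = (U ⊔ Z ⊔ Submodule.span k {x | x ∈ l₁}).map σ'.toLinearMap from
                  map_congr' (fun x hx => hagree x (hTE hx))]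
              exact h5
            · -- d = d₀
              refine ⟨0, em, Bin_zero, Bin_single _, Submodule.zero_mem _, hem1, ?_⟩
              rw [← hdd, hσd₀]
              simp only [sub_zero, sub_self]
              exact Submodule.zero_mem _
            · -- d occurs in R
              have hsplit' : L ++ R.map r = (L ++ M₁.map r) ++ r d :: l₂.map r := by
                rw [hRc]; simp
              obtain ⟨y, y', h1, h2, h3, h4, h5⟩ := hR' (L ++ M₁.map r) (r d) _ hsplit'
              have hdD : d ∈ Esp k N (M + 1) := hDE d (by rw [hD0, hRc]; simp)
              have hrdM : r d ∈ Esp k N M := hrE d hdD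
              have hM₁sub : ∀ x ∈ M₁, x ∈ Esp k N (M + 1) := by
                intro x hx
                exact hDE x (by rw [hD0, hRc]; simp [hx])
              have hT'E : U ⊔ Z ⊔ Submodule.span k {x | x ∈ L ++ M₁.map r} ≤ Esp k N M := by
                refine sup_le (sup_le hU hZ) (span_list_le ?_)
                intro x hx
                rcases List.mem_append.1 hx with hx | hx
                · exact hLmem x hx
                · obtain ⟨xx, hxx, rfl⟩ := List.mem_map.1 hx
                  exact hrE xx (hM₁sub xx hxx)
              have hd₀l₁ : d₀ ∈ Submodule.span k {x | x ∈ l₁} :=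
                Submodule.subset_span (by rw [hl₁c]; simp)
              have hT'T : U ⊔ Z ⊔ Submodule.span k {x | x ∈ L ++ M₁.map r}
                  ≤ U ⊔ Z ⊔ Submodule.span k {x | x ∈ l₁} := by
                refine sup_le (sup_le (le_sup_of_le_left le_sup_left) (le_sup_of_le_left le_sup_right)) ?_
                refine le_trans (span_list_le (T := Submodule.span k {x | x ∈ l₁}) ?_) le_sup_right
                intro x hx
                rcases List.mem_append.1 hx with hx | hx
                · exact Submodule.subset_span (by rw [hl₁c]; simp [hx])
                · obtain ⟨xx, hxx, rfl⟩ := List.mem_map.1 hx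
                  refine Submodule.sub_mem _ (Submodule.subset_span ?_) (Submodule.smul_mem _ _ ?_)
                  · rw [hl₁c]; simp [hxx]
                  · exact hd₀l₁
              refine ⟨y, y', h1, h2, Esp_mono (Nat.le_succ M) h3, Esp_mono (Nat.le_succ M) h4, ?_⟩
              have heq : y' - y - σ d
                  = (y' - y - σ' (r d)) - (d ⟨M, hMN⟩ * (d₀ ⟨M, hMN⟩)⁻¹) • σ d₀ := by
                have hdc : d = r d + (d ⟨M, hMN⟩ * (d₀ ⟨M, hMN⟩)⁻¹) • d₀ := by
                  simp only [hr]; abel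
                rw [show σ d = σ (r d) + (d ⟨M, hMN⟩ * (d₀ ⟨M, hMN⟩)⁻¹) • σ d₀ by
                  conv_lhs => rw [hdc, map_add, map_smul]]
                rw [hagree (r d) hrdM]
                abel
              rw [heq]
              refine Submodule.sub_mem _ ?_ (Submodule.smul_mem _ _ ?_)
              · have h5' : y' - y - σ' (r d)
                    ∈ (U ⊔ Z ⊔ Submodule.span k {x | x ∈ L ++ M₁.map r}).map σ.toLinearMap :=
                  (map_congr' (fun x hx => hagree x (hT'E hx))) ▸ h5
                exact Submodule.map_mono hT'T h5'
              · exact Submodule.mem_map_of_mem (Submodule.mem_sup_right hd₀l₁)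
      · obtain ⟨z0, hz0Z, hz01, hqE⟩ := extract hMN hZE hZ
        have hz0E : z0 ∈ Esp k N (M + 1) := hZE hz0Z
        set r : (Fin N → k) → (Fin N → k) := fun x => x - x ⟨M, hMN⟩ • z0 with hr
        have hrE : ∀ x ∈ Esp k N (M + 1), r x ∈ Esp k N M := fun x hx =>
          sub_smul_mem_Esp hMN hx hz0E (by rw [hz01, mul_one, sub_self])
        have hD'mem : ∀ x ∈ D.map r, x ∈ Esp k N M := by
          intro x hx
          obtain ⟨xx, hxx, rfl⟩ := List.mem_map.1 hx
          exact hrE xx (hDE xx hxx)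
        obtain ⟨σ', hG', hBU', hBZ', hR'⟩ := ih (by omega) U (Z ⊓ Esp k N M) hU
          inf_le_right (D.map r) hD'mem
        set em : Fin N → k := Pi.single ⟨M, hMN⟩ 1 with hem
        have hemM : em ⟨M, hMN⟩ = 1 := by rw [hem]; simp
        have hem1 : em ∈ Esp k N (M + 1) := single_mem_Esp (by simp)
        have hqE' : σ' (z0 - em) ∈ Esp k N M := hG'.mem_Esp_map hqE
        set w : Fin N → k := -(σ' (z0 - em)) with hw
        have hwE : w ∈ Esp k N M := Submodule.neg_mem _ hqE'
        have hγ : (1 : k) ≠ 0 := one_ne_zero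
        set σ := σ'.trans (tweak ⟨M, hMN⟩ 1 w hγ (wm0 hMN hwE)) with hσ
        have hGood : Good (M + 1) σ := hG'.trans_tweak hMN hγ hwE
        have hagree : ∀ x ∈ Esp k N M, σ x = σ' x := fun x hx =>
          trans_tweak_fix hMN hγ hwE hG' hx
        have hem_fix : σ' em = em := hG'.2 _ (by simp)
        have hz0split : σ' z0 = σ' (z0 - em) + em := by
          conv_lhs => rw [show z0 = (z0 - em) + em by abel, map_add, hem_fix]
        have hσz0 : σ z0 = em := by
          rw [hσ, LinearEquiv.trans_apply, tweak_apply]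
          have hcoord : (σ' z0) ⟨M, hMN⟩ = 1 := by
            rw [hz0split]
            have h0 : (σ' (z0 - em)) ⟨M, hMN⟩ = 0 := hqE' _ (by simp)
            rw [Pi.add_apply, h0, hemM, zero_add]
          rw [hcoord, hz0split, hw, ← hem]
          match_scalars <;> ring
        refine ⟨σ, hGood, ?_, ?_, ?_⟩
        · rw [show U.map σ.toLinearMap = U.map σ'.toLinearMap from map_congr' (fun x hx => hagree x (hU hx))]
          exact hBU'
        · exact BinSp_step hMN hagree hZE hz0Z hz01 (by rw [hσz0, hem]; exact Bin_single _) hBZ'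
        · intro l₁ d l₂ hsplit
          have hsplit' : D.map r = l₁.map r ++ (r d) :: l₂.map r := by rw [hsplit]; simp
          obtain ⟨y, y', h1, h2, h3, h4, h5⟩ := hR' (l₁.map r) (r d) (l₂.map r) hsplit'
          have hdE : d ∈ Esp k N (M + 1) := hDE d (by rw [hsplit]; simp)
          have hl₁E : ∀ x ∈ l₁, x ∈ Esp k N (M + 1) := by
            intro x hx
            exact hDE x (by rw [hsplit]; simp [hx])
          have hrdM : r d ∈ Esp k N M := hrE d hdE
          have hT'E : U ⊔ (Z ⊓ Esp k N M) ⊔ Submodule.span k {x | x ∈ l₁.map r}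
              ≤ Esp k N M := by
            refine sup_le (sup_le hU inf_le_right) (span_list_le ?_)
            intro x hx
            obtain ⟨xx, hxx, rfl⟩ := List.mem_map.1 hx
            exact hrE xx (hl₁E xx hxx)
          have hz0T : z0 ∈ U ⊔ Z ⊔ Submodule.span k {x | x ∈ l₁} :=
            Submodule.mem_sup_left (Submodule.mem_sup_right hz0Z)
          have hT'T : U ⊔ (Z ⊓ Esp k N M) ⊔ Submodule.span k {x | x ∈ l₁.map r}
              ≤ U ⊔ Z ⊔ Submodule.span k {x | x ∈ l₁} := by
            refine sup_le (sup_le (le_sup_of_le_left le_sup_left)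
              (le_sup_of_le_left (le_trans inf_le_left le_sup_right))) (span_list_le ?_)
            intro x hx
            obtain ⟨xx, hxx, rfl⟩ := List.mem_map.1 hx
            refine Submodule.sub_mem _ ?_ (Submodule.smul_mem _ _ hz0T)
            exact Submodule.mem_sup_right (Submodule.subset_span hxx)
          refine ⟨y, y', h1, h2, Esp_mono (Nat.le_succ M) h3, Esp_mono (Nat.le_succ M) h4, ?_⟩
          have heq : y' - y - σ d = (y' - y - σ' (r d)) - d ⟨M, hMN⟩ • σ z0 := by
            have hdc : d = r d + d ⟨M, hMN⟩ • z0 := by simp only [hr]; abel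
            rw [show σ d = σ (r d) + d ⟨M, hMN⟩ • σ z0 by
              conv_lhs => rw [hdc, map_add, map_smul]]
            rw [hagree (r d) hrdM]
            abel
          rw [heq]
          refine Submodule.sub_mem _ ?_ (Submodule.smul_mem _ _ ?_)
          · have h5' : y' - y - σ' (r d)
                ∈ (U ⊔ (Z ⊓ Esp k N M) ⊔ Submodule.span k {x | x ∈ l₁.map r}).map σ.toLinearMap :=
              (map_congr' (fun x hx => hagree x (hT'E hx))) ▸ h5
            exact Submodule.map_mono hT'T h5'
          · exact Submodule.mem_map_of_mem hz0T
    · by_cases hZ : Z ≤ Esp k N M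
      · obtain ⟨u0, hu0U, hu01, hpE⟩ := extract hMN hUE hU
        have hu0E : u0 ∈ Esp k N (M + 1) := hUE hu0U
        set r : (Fin N → k) → (Fin N → k) := fun x => x - x ⟨M, hMN⟩ • u0 with hr
        have hrE : ∀ x ∈ Esp k N (M + 1), r x ∈ Esp k N M := fun x hx =>
          sub_smul_mem_Esp hMN hx hu0E (by rw [hu01, mul_one, sub_self])
        have hD'mem : ∀ x ∈ D.map r, x ∈ Esp k N M := by
          intro x hx
          obtain ⟨xx, hxx, rfl⟩ := List.mem_map.1 hx
          exact hrE xx (hDE xx hxx)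
        obtain ⟨σ', hG', hBU', hBZ', hR'⟩ := ih (by omega) (U ⊓ Esp k N M) Z
          inf_le_right hZ (D.map r) hD'mem
        set em : Fin N → k := Pi.single ⟨M, hMN⟩ 1 with hem
        have hemM : em ⟨M, hMN⟩ = 1 := by rw [hem]; simp
        have hem1 : em ∈ Esp k N (M + 1) := single_mem_Esp (by simp)
        have hpE' : σ' (u0 - em) ∈ Esp k N M := hG'.mem_Esp_map hpE
        set w : Fin N → k := -(σ' (u0 - em)) with hw
        have hwE : w ∈ Esp k N M := Submodule.neg_mem _ hpE'
        have hγ : (1 : k) ≠ 0 := one_ne_zero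
        set σ := σ'.trans (tweak ⟨M, hMN⟩ 1 w hγ (wm0 hMN hwE)) with hσ
        have hGood : Good (M + 1) σ := hG'.trans_tweak hMN hγ hwE
        have hagree : ∀ x ∈ Esp k N M, σ x = σ' x := fun x hx =>
          trans_tweak_fix hMN hγ hwE hG' hx
        have hem_fix : σ' em = em := hG'.2 _ (by simp)
        have hu0split : σ' u0 = σ' (u0 - em) + em := by
          conv_lhs => rw [show u0 = (u0 - em) + em by abel, map_add, hem_fix]
        have hσu0 : σ u0 = em := by
          rw [hσ, LinearEquiv.trans_apply, tweak_apply]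
          have hcoord : (σ' u0) ⟨M, hMN⟩ = 1 := by
            rw [hu0split]
            have h0 : (σ' (u0 - em)) ⟨M, hMN⟩ = 0 := hpE' _ (by simp)
            rw [Pi.add_apply, h0, hemM, zero_add]
          rw [hcoord, hu0split, hw, ← hem]
          match_scalars <;> ring
        refine ⟨σ, hGood, ?_, ?_, ?_⟩
        · exact BinSp_step hMN hagree hUE hu0U hu01 (by rw [hσu0, hem]; exact Bin_single _) hBU'
        · rw [show Z.map σ.toLinearMap = Z.map σ'.toLinearMap from map_congr' (fun x hx => hagree x (hZ hx))]
          exact hBZ'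
        · intro l₁ d l₂ hsplit
          have hsplit' : D.map r = l₁.map r ++ (r d) :: l₂.map r := by rw [hsplit]; simp
          obtain ⟨y, y', h1, h2, h3, h4, h5⟩ := hR' (l₁.map r) (r d) (l₂.map r) hsplit'
          have hdE : d ∈ Esp k N (M + 1) := hDE d (by rw [hsplit]; simp)
          have hl₁E : ∀ x ∈ l₁, x ∈ Esp k N (M + 1) := by
            intro x hx
            exact hDE x (by rw [hsplit]; simp [hx])
          have hrdM : r d ∈ Esp k N M := hrE d hdE
          have hT'E : (U ⊓ Esp k N M) ⊔ Z ⊔ Submodule.span k {x | x ∈ l₁.map r}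
              ≤ Esp k N M := by
            refine sup_le (sup_le inf_le_right hZ) (span_list_le ?_)
            intro x hx
            obtain ⟨xx, hxx, rfl⟩ := List.mem_map.1 hx
            exact hrE xx (hl₁E xx hxx)
          have hu0T : u0 ∈ U ⊔ Z ⊔ Submodule.span k {x | x ∈ l₁} :=
            Submodule.mem_sup_left (Submodule.mem_sup_left hu0U)
          have hT'T : (U ⊓ Esp k N M) ⊔ Z ⊔ Submodule.span k {x | x ∈ l₁.map r}
              ≤ U ⊔ Z ⊔ Submodule.span k {x | x ∈ l₁} := by
            refine sup_le (sup_le (le_sup_of_le_left (le_trans inf_le_left le_sup_left))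
              (le_sup_of_le_left le_sup_right)) (span_list_le ?_)
            intro x hx
            obtain ⟨xx, hxx, rfl⟩ := List.mem_map.1 hx
            refine Submodule.sub_mem _ ?_ (Submodule.smul_mem _ _ hu0T)
            exact Submodule.mem_sup_right (Submodule.subset_span hxx)
          refine ⟨y, y', h1, h2, Esp_mono (Nat.le_succ M) h3, Esp_mono (Nat.le_succ M) h4, ?_⟩
          have heq : y' - y - σ d = (y' - y - σ' (r d)) - d ⟨M, hMN⟩ • σ u0 := by
            have hdc : d = r d + d ⟨M, hMN⟩ • u0 := by simp only [hr]; abel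
            rw [show σ d = σ (r d) + d ⟨M, hMN⟩ • σ u0 by
              conv_lhs => rw [hdc, map_add, map_smul]]
            rw [hagree (r d) hrdM]
            abel
          rw [heq]
          refine Submodule.sub_mem _ ?_ (Submodule.smul_mem _ _ ?_)
          · have h5' : y' - y - σ' (r d)
                ∈ ((U ⊓ Esp k N M) ⊔ Z ⊔ Submodule.span k {x | x ∈ l₁.map r}).map σ.toLinearMap :=
              (map_congr' (fun x hx => hagree x (hT'E hx))) ▸ h5
            exact Submodule.map_mono hT'T h5'
          · exact Submodule.mem_map_of_mem hu0T
      · obtain ⟨u0, hu0U, hu01, hpE⟩ := extract hMN hUE hU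
        obtain ⟨z0, hz0Z, hz01, hqE⟩ := extract hMN hZE hZ
        have hu0E : u0 ∈ Esp k N (M + 1) := hUE hu0U
        have hz0E : z0 ∈ Esp k N (M + 1) := hZE hz0Z
        set r : (Fin N → k) → (Fin N → k) := fun x => x - x ⟨M, hMN⟩ • u0 with hr
        have hrE : ∀ x ∈ Esp k N (M + 1), r x ∈ Esp k N M := fun x hx =>
          sub_smul_mem_Esp hMN hx hu0E (by rw [hu01, mul_one, sub_self])
        have hdnE : z0 - u0 ∈ Esp k N M := by
          have h := sub_smul_mem_Esp (c := 1) hMN hz0E hu0E (by rw [hz01, hu01]; ring)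
          rw [one_smul] at h
          exact h
        have hD'mem : ∀ x ∈ (z0 - u0) :: D.map r, x ∈ Esp k N M := by
          intro x hx
          rcases List.mem_cons.1 hx with rfl | hx
          · exact hdnE
          · obtain ⟨xx, hxx, rfl⟩ := List.mem_map.1 hx
            exact hrE xx (hDE xx hxx)
        obtain ⟨σ', hG', hBU', hBZ', hR'⟩ := ih (by omega) (U ⊓ Esp k N M) (Z ⊓ Esp k N M)
          inf_le_right inf_le_right ((z0 - u0) :: D.map r) hD'mem
        obtain ⟨y, y', hBy, hBy', hyE, hy'E, hmem⟩ := hR' [] (z0 - u0) (D.map r) rfl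
        have hspan_nil : Submodule.span k {x | x ∈ ([] : List (Fin N → k))} = ⊥ := by
          convert Submodule.span_empty (R := k) (M := Fin N → k) using 2
          simp
        rw [hspan_nil, sup_bot_eq] at hmem
        obtain ⟨s, hs, hσs⟩ := hmem
        obtain ⟨a, ha, c, hc, hac⟩ := Submodule.mem_sup.1 hs
        have haU : a ∈ U := (Submodule.mem_inf.1 ha).1
        have haE : a ∈ Esp k N M := (Submodule.mem_inf.1 ha).2
        have hcZ : c ∈ Z := (Submodule.mem_inf.1 hc).1
        have hcE : c ∈ Esp k N M := (Submodule.mem_inf.1 hc).2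
        set em : Fin N → k := Pi.single ⟨M, hMN⟩ 1 with hem
        have hemM : em ⟨M, hMN⟩ = 1 := by rw [hem]; simp
        have hem1 : em ∈ Esp k N (M + 1) := single_mem_Esp (by simp)
        have hxE : (u0 - em) + -a ∈ Esp k N M :=
          Submodule.add_mem _ hpE (Submodule.neg_mem _ haE)
        have hyE2 : (z0 - em) + c ∈ Esp k N M := Submodule.add_mem _ hqE hcE
        set w : Fin N → k := y - σ' ((u0 - em) + -a) with hwdef
        have hwE : w ∈ Esp k N M :=
          Submodule.sub_mem _ hyE (hG'.mem_Esp_map hxE)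
        have hγ : (1 : k) ≠ 0 := one_ne_zero
        set σ := σ'.trans (tweak ⟨M, hMN⟩ 1 w hγ (wm0 hMN hwE)) with hσ
        have hGood : Good (M + 1) σ := hG'.trans_tweak hMN hγ hwE
        have hagree : ∀ x ∈ Esp k N M, σ x = σ' x := fun x hx =>
          trans_tweak_fix hMN hγ hwE hG' hx
        have hem_fix : σ' em = em := hG'.2 _ (by simp)
        have hsplit1 : σ' (u0 + -a) = σ' ((u0 - em) + -a) + em := by
          conv_lhs => rw [show u0 + -a = ((u0 - em) + -a) + em by abel, map_add, hem_fix]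
        have h1 : σ (u0 + -a) = em + y := by
          rw [hσ, LinearEquiv.trans_apply, tweak_apply]
          have hcoord : (σ' (u0 + -a)) ⟨M, hMN⟩ = 1 := by
            rw [hsplit1, Pi.add_apply, hG'.mem_Esp_map hxE _ (by simp), hemM, zero_add]
          rw [hcoord, hsplit1, hwdef]
          match_scalars <;> ring
        have hsplit2 : σ' (z0 + c) = σ' ((z0 - em) + c) + em := by
          conv_lhs => rw [show z0 + c = ((z0 - em) + c) + em by abel, map_add, hem_fix]
        have h2 : σ (z0 + c) = em + y' := by
          rw [hσ, LinearEquiv.trans_apply, tweak_apply]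
          have hcoord : (σ' (z0 + c)) ⟨M, hMN⟩ = 1 := by
            rw [hsplit2, Pi.add_apply, hG'.mem_Esp_map hyE2 _ (by simp), hemM, zero_add]
          have hkey : σ' ((z0 - em) + c) = y' - y + σ' ((u0 - em) + -a) := by
            have harg : ((z0 - em) + c) = ((z0 - u0) + s) + ((u0 - em) + -a) := by
              rw [← hac]; abel
            rw [harg, map_add, map_add, show σ' s = _ from hσs]
            abel
          rw [hcoord, hsplit2, hkey, hwdef]
          match_scalars <;> ring
        have hy0 : y ⟨M, hMN⟩ = 0 := hyE _ (by simp)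
        have hy'0 : y' ⟨M, hMN⟩ = 0 := hy'E _ (by simp)
        have huaU : u0 + -a ∈ U := Submodule.add_mem _ hu0U (Submodule.neg_mem _ haU)
        have hzcZ : z0 + c ∈ Z := Submodule.add_mem _ hz0Z hcZ
        have hua1 : (u0 + -a) ⟨M, hMN⟩ = 1 := by
          have haM : a ⟨M, hMN⟩ = 0 := haE _ (by simp)
          simp [hu01, haM]
        have hzc1 : (z0 + c) ⟨M, hMN⟩ = 1 := by
          have hcM : c ⟨M, hMN⟩ = 0 := hcE _ (by simp)
          simp [hz01, hcM]
        refine ⟨σ, hGood, ?_, ?_, ?_⟩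
        · refine BinSp_step hMN hagree hUE huaU hua1 ?_ hBU'
          rw [h1, hem]
          exact Bin_single_add _ hBy hy0
        · refine BinSp_step hMN hagree hZE hzcZ hzc1 ?_ hBZ'
          rw [h2, hem]
          exact Bin_single_add _ hBy' hy'0
        · intro l₁ d l₂ hsplit
          have hsplit' : (z0 - u0) :: D.map r
              = ((z0 - u0) :: l₁.map r) ++ (r d) :: l₂.map r := by rw [hsplit]; simp
          obtain ⟨y₁, y₁', h1', h2', h3', h4', h5'⟩ :=
            hR' ((z0 - u0) :: l₁.map r) (r d) (l₂.map r) hsplit'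
          have hdE : d ∈ Esp k N (M + 1) := hDE d (by rw [hsplit]; simp)
          have hl₁E : ∀ x ∈ l₁, x ∈ Esp k N (M + 1) := by
            intro x hx
            exact hDE x (by rw [hsplit]; simp [hx])
          have hrdM : r d ∈ Esp k N M := hrE d hdE
          have hu0T : u0 ∈ U ⊔ Z ⊔ Submodule.span k {x | x ∈ l₁} :=
            Submodule.mem_sup_left (Submodule.mem_sup_left hu0U)
          have hz0T : z0 ∈ U ⊔ Z ⊔ Submodule.span k {x | x ∈ l₁} :=
            Submodule.mem_sup_left (Submodule.mem_sup_right hz0Z)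
          have hT'E : (U ⊓ Esp k N M) ⊔ (Z ⊓ Esp k N M)
              ⊔ Submodule.span k {x | x ∈ (z0 - u0) :: l₁.map r} ≤ Esp k N M := by
            refine sup_le (sup_le inf_le_right inf_le_right) (span_list_le ?_)
            intro x hx
            rcases List.mem_cons.1 hx with rfl | hx
            · exact hdnE
            · obtain ⟨xx, hxx, rfl⟩ := List.mem_map.1 hx
              exact hrE xx (hl₁E xx hxx)
          have hT'T : (U ⊓ Esp k N M) ⊔ (Z ⊓ Esp k N M)
              ⊔ Submodule.span k {x | x ∈ (z0 - u0) :: l₁.map r}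
              ≤ U ⊔ Z ⊔ Submodule.span k {x | x ∈ l₁} := by
            refine sup_le (sup_le (le_sup_of_le_left (le_trans inf_le_left le_sup_left))
              (le_sup_of_le_left (le_trans inf_le_left le_sup_right))) (span_list_le ?_)
            intro x hx
            rcases List.mem_cons.1 hx with rfl | hx
            · exact Submodule.sub_mem _ hz0T hu0T
            · obtain ⟨xx, hxx, rfl⟩ := List.mem_map.1 hx
              refine Submodule.sub_mem _ ?_ (Submodule.smul_mem _ _ hu0T)
              exact Submodule.mem_sup_right (Submodule.subset_span hxx)
          refine ⟨y₁, y₁', h1', h2', Esp_mono (Nat.le_succ M) h3',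
            Esp_mono (Nat.le_succ M) h4', ?_⟩
          have heq : y₁' - y₁ - σ d = (y₁' - y₁ - σ' (r d)) - d ⟨M, hMN⟩ • σ u0 := by
            have hdc : d = r d + d ⟨M, hMN⟩ • u0 := by simp only [hr]; abel
            rw [show σ d = σ (r d) + d ⟨M, hMN⟩ • σ u0 by
              conv_lhs => rw [hdc, map_add, map_smul]]
            rw [hagree (r d) hrdM]
            abel
          rw [heq]
          refine Submodule.sub_mem _ ?_ (Submodule.smul_mem _ _ ?_)
          · have h5'' : y₁' - y₁ - σ' (r d)
                ∈ ((U ⊓ Esp k N M) ⊔ (Z ⊓ Esp k N M)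
                  ⊔ Submodule.span k {x | x ∈ (z0 - u0) :: l₁.map r}).map σ.toLinearMap :=
              (map_congr' (fun x hx => hagree x (hT'E hx))) ▸ h5'
            exact Submodule.map_mono hT'T h5''
          · exact Submodule.mem_map_of_mem hu0T

end KeyLemma

section Final

variable {k : Type*} [Field k] {N : ℕ}

/-- GL element from a linear automorphism of `Fin N → k` -/
noncomputable def glOf (φ : (Fin N → k) ≃ₗ[k] (Fin N → k)) : GL (Fin N) k :=
  ⟨LinearMap.toMatrix' (φ : (Fin N → k) →ₗ[k] (Fin N → k)),
   LinearMap.toMatrix' (φ.symm : (Fin N → k) →ₗ[k] (Fin N → k)),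
   by
    rw [← LinearMap.toMatrix'_comp,
      show (φ : (Fin N → k) →ₗ[k] (Fin N → k)) ∘ₗ (φ.symm : (Fin N → k) →ₗ[k] (Fin N → k))
        = LinearMap.id from by ext x; simp, LinearMap.toMatrix'_id],
   by
    rw [← LinearMap.toMatrix'_comp,
      show (φ.symm : (Fin N → k) →ₗ[k] (Fin N → k)) ∘ₗ (φ : (Fin N → k) →ₗ[k] (Fin N → k))
        = LinearMap.id from by ext x; simp, LinearMap.toMatrix'_id]⟩

lemma single_eq_ite (j : Fin N) :
    (Pi.single j 1 : Fin N → k) = fun j' => if j' = j then 1 else 0 := by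
  funext j'
  rw [Pi.single_apply]

lemma glOf_coe (φ : (Fin N → k) ≃ₗ[k] (Fin N → k)) (i j : Fin N) :
    ((glOf φ : GL (Fin N) k) : Matrix (Fin N) (Fin N) k) i j = φ (Pi.single j 1) i := by
  show LinearMap.toMatrix' (φ : (Fin N → k) →ₗ[k] (Fin N → k)) i j = _
  rw [LinearMap.toMatrix'_apply]
  rfl

lemma glOf_mul (φ ψ : (Fin N → k) ≃ₗ[k] (Fin N → k)) :
    glOf φ * glOf ψ = glOf (ψ.trans φ) := by
  apply Units.ext
  show LinearMap.toMatrix' _ * LinearMap.toMatrix' _ = LinearMap.toMatrix' _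
  rw [← LinearMap.toMatrix'_comp]
  rfl

lemma glOf_inv (φ : (Fin N → k) ≃ₗ[k] (Fin N → k)) : (glOf φ)⁻¹ = glOf φ.symm := by
  apply Units.ext
  rfl

lemma exists_glOf (g : GL (Fin N) k) : ∃ γ : (Fin N → k) ≃ₗ[k] (Fin N → k), glOf γ = g := by
  refine ⟨LinearEquiv.ofLinear (Matrix.mulVecLin (↑g : Matrix (Fin N) (Fin N) k))
    (Matrix.mulVecLin (↑g⁻¹ : Matrix (Fin N) (Fin N) k)) ?_ ?_, ?_⟩
  · rw [← Matrix.mulVecLin_mul, Units.mul_inv, Matrix.mulVecLin_one]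
  · rw [← Matrix.mulVecLin_mul, Units.inv_mul, Matrix.mulVecLin_one]
  · apply Units.ext
    show LinearMap.toMatrix' _ = _
    ext i j
    rw [show (LinearEquiv.ofLinear (Matrix.mulVecLin (↑g : Matrix (Fin N) (Fin N) k))
      (Matrix.mulVecLin (↑g⁻¹ : Matrix (Fin N) (Fin N) k)) (by
        rw [← Matrix.mulVecLin_mul, Units.mul_inv, Matrix.mulVecLin_one]) (by
        rw [← Matrix.mulVecLin_mul, Units.inv_mul, Matrix.mulVecLin_one])
        : (Fin N → k) →ₗ[k] (Fin N → k)) = Matrix.mulVecLin (↑g : Matrix (Fin N) (Fin N) k)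
      from rfl]
    rw [LinearMap.toMatrix'_apply, Matrix.mulVecLin_apply,
      Matrix.mulVec_single]
    exact mul_one _

end Final

section Final2

variable {k : Type*} [Field k]

def Fsp (k : Type*) [Field k] (N m : ℕ) : Submodule k (Fin N → k) where
  carrier := {x | ∀ j : Fin N, (j : ℕ) < m → x j = 0}
  add_mem' := by intro a b ha hb j hj; simp only [Pi.add_apply, ha j hj, hb j hj, add_zero]
  zero_mem' := by intro j hj; rfl
  smul_mem' := by intro c x hx j hj; simp only [Pi.smul_apply, hx j hj, smul_zero]

lemma sup_Esp_Fsp {N m : ℕ} : Esp k N m ⊔ Fsp k N m = ⊤ := by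
  rw [eq_top_iff]
  intro x _
  rw [Submodule.mem_sup]
  refine ⟨fun j => if (j : ℕ) < m then x j else 0, ?_,
    fun j => if (j : ℕ) < m then 0 else x j, ?_, ?_⟩
  · intro j hj
    simp [not_lt.2 hj]
  · intro j hj
    simp [hj]
  · funext j
    by_cases h : (j : ℕ) < m <;> simp [h]

lemma Esp_eq_span {N m : ℕ} (hm : m ≤ N) :
    Esp k N m = Submodule.span k (Set.range ((Pi.basisFun k (Fin N)) ∘ Fin.castLE hm)) := by
  apply le_antisymm
  · intro x hx
    rw [expand x]
    apply Submodule.sum_mem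
    intro j _
    by_cases hj : (j : ℕ) < m
    · refine Submodule.smul_mem _ _ (Submodule.subset_span ⟨⟨(j : ℕ), hj⟩, ?_⟩)
      simp only [Function.comp_apply, Pi.basisFun_apply]
      congr 1
    · rw [hx j (le_of_not_gt hj), zero_smul]
      exact Submodule.zero_mem _
  · rw [Submodule.span_le]
    rintro y ⟨j, rfl⟩
    simp only [Function.comp_apply, Pi.basisFun_apply]
    exact single_mem_Esp (by simp)

lemma finrank_Esp {N m : ℕ} (hm : m ≤ N) : Module.finrank k (Esp k N m) = m := by
  rw [Esp_eq_span hm,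
    finrank_span_eq_card ((Pi.basisFun k (Fin N)).linearIndependent.comp _
      (Fin.castLE_injective hm)),
    Fintype.card_fin]

lemma Fsp_eq_span {m n : ℕ} :
    Fsp k (m + n) m = Submodule.span k (Set.range ((Pi.basisFun k (Fin (m + n)))
      ∘ (fun j : Fin n => (⟨m + (j : ℕ), by omega⟩ : Fin (m + n))))) := by
  apply le_antisymm
  · intro x hx
    rw [expand x]
    apply Submodule.sum_mem
    intro j _
    by_cases hj : (j : ℕ) < m
    · rw [hx j hj, zero_smul]
      exact Submodule.zero_mem _
    · refine Submodule.smul_mem _ _ (Submodule.subset_span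
        ⟨⟨(j : ℕ) - m, by omega⟩, ?_⟩)
      simp only [Function.comp_apply, Pi.basisFun_apply]
      have hidx : (⟨m + ((j : ℕ) - m), by omega⟩ : Fin (m + n)) = j := by
        apply Fin.ext
        simp only [Fin.val_mk]
        omega
      rw [hidx]
  · rw [Submodule.span_le]
    rintro y ⟨j, rfl⟩
    simp only [Function.comp_apply, Pi.basisFun_apply]
    intro i hi
    apply Pi.single_eq_of_ne
    intro hij
    rw [Fin.ext_iff] at hij
    simp only [Fin.val_mk] at hij
    omega

lemma finrank_Fsp {m n : ℕ} : Module.finrank k (Fsp k (m + n) m) = n := by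
  rw [Fsp_eq_span,
    finrank_span_eq_card ((Pi.basisFun k (Fin (m + n))).linearIndependent.comp _ ?_),
    Fintype.card_fin]
  intro a b hab
  rw [Fin.ext_iff] at hab ⊢
  simp only [Fin.val_mk] at hab
  omega

lemma map_lin_eq {N : ℕ} (σ : (Fin N → k) ≃ₗ[k] (Fin N → k)) (p : Submodule k (Fin N → k)) :
    Submodule.map (σ : (Fin N → k) →ₗ[k] (Fin N → k)) p = Submodule.map σ.toLinearMap p := rfl

end Final2

end BinCoset

open BinCoset in
/-- For any field `k` and `m, n ≥ 0` with `m + n ≥ 1`, every double coset in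
`B(k)\GL_{m+n}(k)/K(k)` contains a binary matrix, i.e. an invertible matrix every entry of
which is `0` or `1`. Here `B(k)` is the group of invertible upper triangular matrices and
`K(k)` is the block diagonal subgroup `GL_m × GL_n`. -/
theorem double_coset_contains_binary_matrix (k : Type*) [Field k] (m n : ℕ)
    (hmn : 1 ≤ m + n) (g : GL (Fin (m + n)) k) :
    ∃ b h : GL (Fin (m + n)) k,
      IsUpperTriangular (b : Matrix (Fin (m + n)) (Fin (m + n)) k) ∧
      IsBlockDiag m (h : Matrix (Fin (m + n)) (Fin (m + n)) k) ∧
      ∀ i j : Fin (m + n),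
        ((b * g * h : GL (Fin (m + n)) k) : Matrix (Fin (m + n)) (Fin (m + n)) k) i j = 0 ∨
        ((b * g * h : GL (Fin (m + n)) k) : Matrix (Fin (m + n)) (Fin (m + n)) k) i j = 1 := by
  classical
  obtain ⟨γ, hγg⟩ := exists_glOf g
  have hle : ∀ (S : Submodule k (Fin (m + n) → k)), S ≤ Esp k (m + n) (m + n) := by
    intro S x _ j hj
    exact absurd j.isLt (not_lt.2 hj)
  obtain ⟨σ, hGood, hBSP, hBSQ, -⟩ := key k (m + n) (m + n) le_rfl
    ((Esp k (m + n) m).map γ.toLinearMap) ((Fsp k (m + n) m).map γ.toLinearMap) (hle _) (hle _) [] (by simp)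
  set P := (((Esp k (m + n) m).map γ.toLinearMap).map σ.toLinearMap) with hP
  set Q := (((Fsp k (m + n) m).map γ.toLinearMap).map σ.toLinearMap) with hQ
  have hPspan : Submodule.span k {x | x ∈ P ∧ Bin x} = P :=
    le_antisymm (Submodule.span_le.2 fun x hx => hx.1) hBSP
  have hQspan : Submodule.span k {x | x ∈ Q ∧ Bin x} = Q :=
    le_antisymm (Submodule.span_le.2 fun x hx => hx.1) hBSQ
  obtain ⟨t, htsub, htspan, htind⟩ := exists_linearIndependent k {x | x ∈ P ∧ Bin x}
  obtain ⟨t', ht'sub, ht'span, ht'ind⟩ := exists_linearIndependent k {x | x ∈ Q ∧ Bin x}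
  have htP : Submodule.span k t = P := htspan.trans hPspan
  have ht'Q : Submodule.span k t' = Q := ht'span.trans hQspan
  have htfin : t.Finite := htind.setFinite
  have ht'fin : t'.Finite := ht'ind.setFinite
  haveI : Fintype t := htfin.fintype
  haveI : Fintype t' := ht'fin.fintype
  have hrankP : Module.finrank k P = m := by
    rw [hP, ← map_lin_eq, LinearEquiv.finrank_map_eq, ← map_lin_eq, LinearEquiv.finrank_map_eq]
    exact finrank_Esp (Nat.le_add_right m n)
  have hrankQ : Module.finrank k Q = n := by
    rw [hQ, ← map_lin_eq, LinearEquiv.finrank_map_eq, ← map_lin_eq, LinearEquiv.finrank_map_eq]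
    exact finrank_Fsp
  have hcardt : Fintype.card t = m := by
    have h1 := finrank_span_set_eq_card htind
    rw [htP, hrankP, Set.toFinset_card] at h1
    omega
  have hcardt' : Fintype.card t' = n := by
    have h1 := finrank_span_set_eq_card ht'ind
    rw [ht'Q, hrankQ, Set.toFinset_card] at h1
    omega
  set e : Fin m ≃ t := (Fintype.equivFinOfCardEq hcardt).symm with he
  set e' : Fin n ≃ t' := (Fintype.equivFinOfCardEq hcardt').symm with he'
  set f : Fin (m + n) → (Fin (m + n) → k) := fun j =>
    if h : (j : ℕ) < m then ((e ⟨(j : ℕ), h⟩ : t) : Fin (m + n) → k)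
    else ((e' ⟨(j : ℕ) - m, by omega⟩ : t') : Fin (m + n) → k) with hf
  have hfbin : ∀ j : Fin (m + n), Bin (f j) := by
    intro j
    simp only [hf]
    by_cases h : (j : ℕ) < m
    · rw [dif_pos h]
      exact (htsub (e ⟨(j : ℕ), h⟩).2).2
    · rw [dif_neg h]
      exact (ht'sub (e' ⟨(j : ℕ) - m, by omega⟩).2).2
  have hfP : ∀ j : Fin (m + n), ((j : ℕ) < m) → f j ∈ P := by
    intro j h
    simp only [hf]
    rw [dif_pos h]
    exact (htsub (e ⟨(j : ℕ), h⟩).2).1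
  have hfQ : ∀ j : Fin (m + n), ¬ ((j : ℕ) < m) → f j ∈ Q := by
    intro j h
    simp only [hf]
    rw [dif_neg h]
    exact (ht'sub (e' ⟨(j : ℕ) - m, by omega⟩).2).1
  have hfval : ∀ (i : Fin m), f ⟨(i : ℕ), lt_of_lt_of_le i.isLt (Nat.le_add_right m n)⟩ = ((e i : t) : Fin (m + n) → k) := by
    intro i
    simp only [hf]
    rw [dif_pos (show ((⟨(i : ℕ), lt_of_lt_of_le i.isLt (Nat.le_add_right m n)⟩ : Fin (m + n)) : ℕ) < m from i.isLt)]
  have hf'val : ∀ (i : Fin n), f ⟨m + (i : ℕ), Nat.add_lt_add_left i.isLt m⟩ = ((e' i : t') : Fin (m + n) → k) := by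
    intro i
    simp only [hf]
    rw [dif_neg (show ¬ ((⟨m + (i : ℕ), Nat.add_lt_add_left i.isLt m⟩ : Fin (m + n)) : ℕ) < m by
      simp only [Fin.val_mk]; omega)]
    congr 1
    congr 1
    apply Fin.ext
    simp only [Fin.val_mk]
    omega
  have hPQ : P ⊔ Q = ⊤ := by
    rw [eq_top_iff]
    intro x _
    obtain ⟨x1, h1, x2, h2, hx12⟩ := Submodule.mem_sup.1
      (show γ.symm (σ.symm x) ∈ Esp k (m + n) m ⊔ Fsp k (m + n) m by
        rw [sup_Esp_Fsp]; exact Submodule.mem_top)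
    have hx : x = σ (γ x1) + σ (γ x2) := by
      calc x = σ (γ (γ.symm (σ.symm x))) := by simp
      _ = σ (γ (x1 + x2)) := by rw [hx12]
      _ = σ (γ x1) + σ (γ x2) := by rw [map_add, map_add]
    rw [hx]
    exact Submodule.add_mem _
      (Submodule.mem_sup_left (Submodule.mem_map_of_mem (Submodule.mem_map_of_mem h1)))
      (Submodule.mem_sup_right (Submodule.mem_map_of_mem (Submodule.mem_map_of_mem h2)))
  have htf : t ⊆ Set.range f := by
    intro x hx
    refine ⟨⟨((e.symm ⟨x, hx⟩ : Fin m) : ℕ), lt_of_lt_of_le (e.symm ⟨x, hx⟩).isLt (Nat.le_add_right m n)⟩, ?_⟩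
    rw [hfval (e.symm ⟨x, hx⟩)]
    simp
  have ht'f : t' ⊆ Set.range f := by
    intro x hx
    refine ⟨⟨m + ((e'.symm ⟨x, hx⟩ : Fin n) : ℕ), Nat.add_lt_add_left (e'.symm ⟨x, hx⟩).isLt m⟩, ?_⟩
    rw [hf'val (e'.symm ⟨x, hx⟩)]
    simp
  have htop : ⊤ ≤ Submodule.span k (Set.range f) := by
    rw [← hPQ]
    apply sup_le
    · rw [← htP]
      exact Submodule.span_mono htf
    · rw [← ht'Q]
      exact Submodule.span_mono ht'f
  have hcardfin : Fintype.card (Fin (m + n)) = Module.finrank k (Fin (m + n) → k) := by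
    rw [Module.finrank_pi]
  set Bf := basisOfTopLeSpanOfCardEqFinrank f htop hcardfin with hBf
  set ξ := (Pi.basisFun k (Fin (m + n))).equiv Bf (Equiv.refl _) with hξdef
  have hξ : ∀ j : Fin (m + n), ξ (Pi.single j 1) = f j := by
    intro j
    have h1 : (Pi.basisFun k (Fin (m + n))) j = (Pi.single j 1 : Fin (m + n) → k) := by
      simp [Pi.basisFun_apply]
    rw [← h1, hξdef, Module.Basis.equiv_apply, Equiv.refl_apply, hBf,
      coe_basisOfTopLeSpanOfCardEqFinrank]
  refine ⟨glOf σ, (glOf σ * g)⁻¹ * glOf ξ, ?_, ?_, ?_⟩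
  · intro i j hji
    rw [glOf_coe]
    exact hGood.1 j i hji
  · have hh : (glOf σ * g)⁻¹ * glOf ξ = glOf (ξ.trans ((γ.trans σ).symm)) := by
      rw [← hγg, glOf_mul, glOf_inv, glOf_mul]
    intro i j hij
    rw [hh, glOf_coe, LinearEquiv.trans_apply, hξ j]
    by_cases hj : (j : ℕ) < m
    · obtain ⟨y2, hy2, hy2e⟩ := Submodule.mem_map.1 (hfP j hj)
      obtain ⟨x1, hx1, hx1e⟩ := Submodule.mem_map.1 hy2
      have hback : (γ.trans σ).symm (f j) = x1 := by
        rw [← hy2e, ← hx1e]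
        exact LinearEquiv.symm_apply_apply (γ.trans σ) x1
      rw [hback]
      have him : m ≤ (i : ℕ) := by
        by_contra hc
        exact hij (iff_of_true (not_le.1 hc) hj)
      exact hx1 i him
    · obtain ⟨y2, hy2, hy2e⟩ := Submodule.mem_map.1 (hfQ j hj)
      obtain ⟨x1, hx1, hx1e⟩ := Submodule.mem_map.1 hy2
      have hback : (γ.trans σ).symm (f j) = x1 := by
        rw [← hy2e, ← hx1e]
        exact LinearEquiv.symm_apply_apply (γ.trans σ) x1
      rw [hback]
      have him : (i : ℕ) < m := by
        by_contra hc
        exact hij (iff_of_false hc hj)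
      exact hx1 i him
  · intro i j
    have hfin : glOf σ * g * ((glOf σ * g)⁻¹ * glOf ξ) = glOf ξ := mul_inv_cancel_left _ _
    rw [hfin, glOf_coe, hξ j]
    exact hfbin j i
end

section
/- For all integers p ≥ 2 and m ≥ 1, the numbers a_{p,m} satisfy the recurrence a_{p,m} = a_{p−1,m−1} + a_{p−1,m} + (p−1)·a_{p−2,m−1}, where by convention a_{p,0} = 1 for all p ≥ 0 and a_{p,m} = 0 when m < 0 or when the corona graph C_p has no m-matching. -/
open Sum Matrix

/-- The corona graph `C_p` on vertices `v_1,…,v_p` (the `inl`s) and `w_1,…,w_p` (the `inr`s):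
the `v_i` form a complete graph (internal edges) and each `v_i` is joined
to `w_i` (pendant edges). -/
def corona (p : ℕ) : SimpleGraph (Fin p ⊕ Fin p) where
  Adj x y :=
    (∃ i j : Fin p, i ≠ j ∧ x = inl i ∧ y = inl j) ∨
    (∃ i : Fin p, x = inl i ∧ y = inr i) ∨
    (∃ i : Fin p, x = inr i ∧ y = inl i)
  symm := by
    constructor
    rintro x y (⟨i, j, hij, rfl, rfl⟩ | ⟨i, rfl, rfl⟩ | ⟨i, rfl, rfl⟩)
    · exact Or.inl ⟨j, i, hij.symm, rfl, rfl⟩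
    · exact Or.inr (Or.inr ⟨i, rfl, rfl⟩)
    · exact Or.inr (Or.inl ⟨i, rfl, rfl⟩)
  loopless := by
    constructor
    rintro x (⟨i, j, hij, rfl, h⟩ | ⟨i, rfl, h⟩ | ⟨i, rfl, h⟩)
    · exact hij (by simpa using h)
    · simp at h
    · simp at h

/-- `s` is an `m`-matching of the graph `G`: a set of `m` edges of `G`,
no two of which share a vertex. -/
def IsNMatching {V : Type*} (G : SimpleGraph V) (m : ℕ) (s : Finset (Sym2 V)) : Prop :=
  s.card = m ∧ (∀ e ∈ s, e ∈ G.edgeSet) ∧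
    ∀ e ∈ s, ∀ f ∈ s, e ≠ f → ∀ v : V, v ∈ e → v ∉ f

/-- `a_{p,m}`: the number of `m`-matchings in the corona graph `C_p`.
(For `m = 0` this is `1` — the empty matching — and it is `0` whenever `C_p`
has no `m`-matching.) -/
noncomputable def aNum (p m : ℕ) : ℕ :=
  Nat.card {s : Finset (Sym2 (Fin p ⊕ Fin p)) // IsNMatching (corona p) m s}

section Machinery

variable {a b : ℕ} {f : Fin a → Fin b}

/-- The vertex map induced by `f`. -/
abbrev vMap (f : Fin a → Fin b) : Fin a ⊕ Fin a → Fin b ⊕ Fin b := Sum.map f f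

lemma vMap_inj (hf : Function.Injective f) : Function.Injective (vMap f) :=
  Sum.map_injective.mpr ⟨hf, hf⟩

/-- The edge embedding induced by an injective `f`. -/
noncomputable def eEmb (hf : Function.Injective f) :
    Sym2 (Fin a ⊕ Fin a) ↪ Sym2 (Fin b ⊕ Fin b) :=
  ⟨Sym2.map (vMap f), Sym2.map.injective (vMap_inj hf)⟩

lemma corona_adj_map (hf : Function.Injective f) {x y : Fin a ⊕ Fin a}
    (h : (corona a).Adj x y) : (corona b).Adj (vMap f x) (vMap f y) := by
  rcases h with ⟨i, j, hij, rfl, rfl⟩ | ⟨i, rfl, rfl⟩ | ⟨i, rfl, rfl⟩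
  · exact Or.inl ⟨f i, f j, fun h => hij (hf h), rfl, rfl⟩
  · exact Or.inr (Or.inl ⟨f i, rfl, rfl⟩)
  · exact Or.inr (Or.inr ⟨f i, rfl, rfl⟩)

lemma corona_adj_of_map (hf : Function.Injective f) {x y : Fin a ⊕ Fin a}
    (h : (corona b).Adj (vMap f x) (vMap f y)) : (corona a).Adj x y := by
  rcases h with ⟨i, j, hij, hx, hy⟩ | ⟨i, hx, hy⟩ | ⟨i, hx, hy⟩
  · cases x with
    | inl x' => cases y with
      | inl y' =>
        refine Or.inl ⟨x', y', ?_, rfl, rfl⟩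
        rintro rfl
        have hx' : f x' = i := by simpa [vMap] using hx
        have hy' : f x' = j := by simpa [vMap] using hy
        exact hij (hx'.symm.trans hy')
      | inr y' => simp [vMap] at hy
    | inr x' => simp [vMap] at hx
  · cases x with
    | inl x' => cases y with
      | inl y' => simp [vMap] at hy
      | inr y' =>
        have hx' : f x' = i := by simpa [vMap] using hx
        have hy' : f y' = i := by simpa [vMap] using hy
        have : x' = y' := hf (hx'.trans hy'.symm)
        exact Or.inr (Or.inl ⟨x', rfl, by rw [this]⟩)
    | inr x' => simp [vMap] at hx
  · cases x with
    | inl x' => simp [vMap] at hx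
    | inr x' => cases y with
      | inl y' =>
        have hx' : f x' = i := by simpa [vMap] using hx
        have hy' : f y' = i := by simpa [vMap] using hy
        have : y' = x' := hf (hy'.trans hx'.symm)
        exact Or.inr (Or.inr ⟨x', rfl, by rw [this]⟩)
      | inr y' => simp [vMap] at hy

lemma mem_of_mem_map (hf : Function.Injective f) {s : Finset (Sym2 (Fin a ⊕ Fin a))}
    {e : Sym2 (Fin b ⊕ Fin b)} (he : e ∈ s.map (eEmb hf)) {v : Fin b ⊕ Fin b}
    (hv : v ∈ e) : ∃ u, vMap f u = v := by
  rw [Finset.mem_map] at he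
  obtain ⟨e', _, rfl⟩ := he
  obtain ⟨u, _, hu⟩ := Sym2.mem_map.mp hv
  exact ⟨u, hu⟩

/-- Edges in the mapped set avoid vertices with index not in the range of `f`. -/
lemma avoid_of_mem_map (hf : Function.Injective f) {s : Finset (Sym2 (Fin a ⊕ Fin a))}
    {e : Sym2 (Fin b ⊕ Fin b)} (he : e ∈ s.map (eEmb hf)) {i : Fin b}
    (hi : ∀ u, f u ≠ i) : inl i ∉ e ∧ inr i ∉ e := by
  constructor
  · intro hv
    obtain ⟨u, hu⟩ := mem_of_mem_map hf he hv
    cases u with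
    | inl u' => exact hi u' (by simpa [vMap] using hu)
    | inr u' => simp [vMap] at hu
  · intro hv
    obtain ⟨u, hu⟩ := mem_of_mem_map hf he hv
    cases u with
    | inl u' => simp [vMap] at hu
    | inr u' => exact hi u' (by simpa [vMap] using hu)

lemma isNMatching_map (hf : Function.Injective f) {m : ℕ}
    {s : Finset (Sym2 (Fin a ⊕ Fin a))} (hs : IsNMatching (corona a) m s) :
    IsNMatching (corona b) m (s.map (eEmb hf)) := by
  obtain ⟨hc, he, hd⟩ := hs
  refine ⟨by simp [hc], ?_, ?_⟩
  · intro e hes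
    rw [Finset.mem_map] at hes
    obtain ⟨e', he', rfl⟩ := hes
    induction e' using Sym2.ind with
    | _ x y =>
      have := he _ he'
      rw [SimpleGraph.mem_edgeSet] at this
      show Sym2.map (vMap f) s(x, y) ∈ _
      rw [Sym2.map_pair_eq, SimpleGraph.mem_edgeSet]
      exact corona_adj_map hf this
  · intro e hes g hgs hne v hve hvg
    rw [Finset.mem_map] at hes hgs
    obtain ⟨e', he', rfl⟩ := hes
    obtain ⟨g', hg', rfl⟩ := hgs
    have hne' : e' ≠ g' := fun h => hne (by rw [h])
    obtain ⟨u, hue, hu⟩ := Sym2.mem_map.mp hve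
    obtain ⟨w, hwg, hw⟩ := Sym2.mem_map.mp hvg
    have : u = w := vMap_inj hf (hu.trans hw.symm)
    exact hd e' he' g' hg' hne' u hue (this ▸ hwg)

lemma sym2_exists_preimage (hf : Function.Injective f) {e : Sym2 (Fin b ⊕ Fin b)}
    (h : ∀ v ∈ e, ∃ u, vMap f u = v) : ∃ e', Sym2.map (vMap f) e' = e := by
  induction e using Sym2.ind with
  | _ x y =>
    obtain ⟨u, hu⟩ := h x (by simp)
    obtain ⟨w, hw⟩ := h y (by simp)
    exact ⟨s(u, w), by simp [hu, hw]⟩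

lemma exists_preimage (hf : Function.Injective f) {m : ℕ}
    {t : Finset (Sym2 (Fin b ⊕ Fin b))} (ht : IsNMatching (corona b) m t)
    (hr : ∀ e ∈ t, ∀ v ∈ e, ∃ u, vMap f u = v) :
    ∃ s, IsNMatching (corona a) m s ∧ s.map (eEmb hf) = t := by
  classical
  obtain ⟨hc, he, hd⟩ := ht
  have hinj : Set.InjOn (Sym2.map (vMap f)) (Sym2.map (vMap f) ⁻¹' ↑t) :=
    fun x _ y _ h => Sym2.map.injective (vMap_inj hf) h
  refine ⟨t.preimage (Sym2.map (vMap f)) hinj, ?_, ?_⟩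
  case refine_2 =>
    rw [Finset.map_eq_image]
    show Finset.image (Sym2.map (vMap f)) _ = t
    rw [Finset.image_preimage]
    rw [Finset.filter_true_of_mem]
    intro e het
    obtain ⟨e', he'⟩ := sym2_exists_preimage hf (hr e het)
    exact ⟨e', he'⟩
  case refine_1 =>
    have hmapeq : (t.preimage (Sym2.map (vMap f)) hinj).map (eEmb hf) = t := by
      rw [Finset.map_eq_image]
      show Finset.image (Sym2.map (vMap f)) _ = t
      rw [Finset.image_preimage, Finset.filter_true_of_mem]
      intro e het
      obtain ⟨e', he'⟩ := sym2_exists_preimage hf (hr e het)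
      exact ⟨e', he'⟩
    refine ⟨?_, ?_, ?_⟩
    · have := congrArg Finset.card hmapeq
      rwa [Finset.card_map, hc] at this
    · intro e hes
      have het : Sym2.map (vMap f) e ∈ t := Finset.mem_preimage.mp hes
      induction e using Sym2.ind with
      | _ x y =>
        have := he _ het
        rw [Sym2.map_pair_eq, SimpleGraph.mem_edgeSet] at this
        rw [SimpleGraph.mem_edgeSet]
        exact corona_adj_of_map hf this
    · intro e hes g hgs hne v hve hvg
      have het : Sym2.map (vMap f) e ∈ t := Finset.mem_preimage.mp hes
      have hgt : Sym2.map (vMap f) g ∈ t := Finset.mem_preimage.mp hgs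
      have hne' : Sym2.map (vMap f) e ≠ Sym2.map (vMap f) g :=
        fun h => hne (Sym2.map.injective (vMap_inj hf) h)
      exact hd _ het _ hgt hne' (vMap f v) (Sym2.mem_map.mpr ⟨v, hve, rfl⟩)
        (Sym2.mem_map.mpr ⟨v, hvg, rfl⟩)

end Machinery

section Structure

/-- Edges of the corona through a pendant vertex `inr i` are the pendant edge. -/
lemma pendant_unique {p : ℕ} {e : Sym2 (Fin p ⊕ Fin p)} (he : e ∈ (corona p).edgeSet)
    {i : Fin p} (hi : inr i ∈ e) : e = s(inl i, inr i) := by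
  induction e using Sym2.ind with
  | _ x y =>
    rw [SimpleGraph.mem_edgeSet] at he
    rw [Sym2.mem_iff] at hi
    rcases he with ⟨i', j', hij, rfl, rfl⟩ | ⟨i', rfl, rfl⟩ | ⟨i', rfl, rfl⟩
    · rcases hi with h | h <;> simp at h
    · rcases hi with h | h
      · simp at h
      · obtain rfl : i = i' := by simpa using h
        rfl
    · rcases hi with h | h
      · obtain rfl : i = i' := by simpa using h
        exact Sym2.eq_swap
      · simp at h

lemma edge_at_inl {p : ℕ} {e : Sym2 (Fin p ⊕ Fin p)} (he : e ∈ (corona p).edgeSet)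
    {i : Fin p} (hi : inl i ∈ e) :
    e = s(inl i, inr i) ∨ ∃ j, j ≠ i ∧ e = s(inl i, inl j) := by
  induction e using Sym2.ind with
  | _ x y =>
    rw [SimpleGraph.mem_edgeSet] at he
    rw [Sym2.mem_iff] at hi
    rcases he with ⟨i', j', hij, rfl, rfl⟩ | ⟨i', rfl, rfl⟩ | ⟨i', rfl, rfl⟩
    · rcases hi with h | h
      · obtain rfl : i = i' := by simpa using h
        exact Or.inr ⟨j', fun hh => hij hh.symm, rfl⟩
      · obtain rfl : i = j' := by simpa using h
        exact Or.inr ⟨i', hij, Sym2.eq_swap⟩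
    · rcases hi with h | h
      · obtain rfl : i = i' := by simpa using h
        exact Or.inl rfl
      · simp at h
    · rcases hi with h | h
      · simp at h
      · obtain rfl : i = i' := by simpa using h
        exact Or.inl Sym2.eq_swap

end Structure

section Key

variable (r n : ℕ)

/-- The distinguished internal vertex. -/
abbrev vL : Fin (r + 2) := Fin.last (r + 1)

/-- The pendant edge at the last vertex. -/
abbrev pend : Sym2 (Fin (r + 2) ⊕ Fin (r + 2)) := s(inl (vL r), inr (vL r))

/-- The internal edge from the last vertex to `castSucc j`. -/
abbrev iEdge (j : Fin (r + 1)) : Sym2 (Fin (r + 2) ⊕ Fin (r + 2)) :=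
  s(inl (vL r), inl (Fin.castSucc j))

lemma emb1_inj : Function.Injective (Fin.castSucc : Fin (r + 1) → Fin (r + 2)) :=
  Fin.castSucc_injective _

lemma emb2_inj (j : Fin (r + 1)) :
    Function.Injective ((Fin.castSucc : Fin (r + 1) → Fin (r + 2)) ∘ j.succAbove) :=
  (Fin.castSucc_injective _).comp Fin.succAbove_right_injective

lemma emb1_ne_last (u : Fin (r + 1)) : Fin.castSucc u ≠ vL r :=
  (Fin.castSucc_lt_last u).ne

lemma emb2_ne_last (j : Fin (r + 1)) (u : Fin r) :
    Fin.castSucc (j.succAbove u) ≠ vL r := (Fin.castSucc_lt_last _).ne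

lemma emb2_ne_j (j : Fin (r + 1)) (u : Fin r) :
    Fin.castSucc (j.succAbove u) ≠ Fin.castSucc j := by
  intro h
  exact Fin.succAbove_ne j u ((Fin.castSucc_injective _) h)

end Key

section Maps

variable {r n : ℕ}

local notation "M" p ", " m => {s : Finset (Sym2 (Fin p ⊕ Fin p)) // IsNMatching (corona p) m s}

noncomputable def map1 (r n : ℕ) (s : Finset (Sym2 (Fin (r + 1) ⊕ Fin (r + 1))))
    (hs : IsNMatching (corona (r + 1)) n s) :
    Finset (Sym2 (Fin (r + 2) ⊕ Fin (r + 2))) :=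
  insert (pend r) (s.map (eEmb (emb1_inj r)))

noncomputable def map2 (r n : ℕ) (s : Finset (Sym2 (Fin (r + 1) ⊕ Fin (r + 1)))) :
    Finset (Sym2 (Fin (r + 2) ⊕ Fin (r + 2))) :=
  s.map (eEmb (emb1_inj r))

noncomputable def map3 (r n : ℕ) (j : Fin (r + 1))
    (s : Finset (Sym2 (Fin r ⊕ Fin r))) :
    Finset (Sym2 (Fin (r + 2) ⊕ Fin (r + 2))) :=
  insert (iEdge r j) (s.map (eEmb (emb2_inj r j)))

end Maps

section Matchings

variable {r n : ℕ}

lemma avoid1 {s : Finset (Sym2 (Fin (r + 1) ⊕ Fin (r + 1)))}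
    {e : Sym2 (Fin (r + 2) ⊕ Fin (r + 2))} (he : e ∈ s.map (eEmb (emb1_inj r))) :
    inl (vL r) ∉ e ∧ inr (vL r) ∉ e :=
  avoid_of_mem_map _ he (emb1_ne_last r)

lemma avoid2L {j : Fin (r + 1)} {s : Finset (Sym2 (Fin r ⊕ Fin r))}
    {e : Sym2 (Fin (r + 2) ⊕ Fin (r + 2))} (he : e ∈ s.map (eEmb (emb2_inj r j))) :
    inl (vL r) ∉ e ∧ inr (vL r) ∉ e :=
  avoid_of_mem_map _ he (emb2_ne_last r j)

lemma avoid2j {j : Fin (r + 1)} {s : Finset (Sym2 (Fin r ⊕ Fin r))}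
    {e : Sym2 (Fin (r + 2) ⊕ Fin (r + 2))} (he : e ∈ s.map (eEmb (emb2_inj r j))) :
    inl (Fin.castSucc j) ∉ e ∧ inr (Fin.castSucc j) ∉ e :=
  avoid_of_mem_map _ he (emb2_ne_j r j)

lemma pend_not_mem_map {s : Finset (Sym2 (Fin (r + 1) ⊕ Fin (r + 1)))} :
    pend r ∉ s.map (eEmb (emb1_inj r)) :=
  fun h => (avoid1 h).1 (by simp)

lemma iEdge_not_mem_map {j : Fin (r + 1)} {s : Finset (Sym2 (Fin r ⊕ Fin r))} :
    iEdge r j ∉ s.map (eEmb (emb2_inj r j)) :=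
  fun h => (avoid2L h).1 (by simp)

lemma pend_mem_edgeSet : pend r ∈ (corona (r + 2)).edgeSet := by
  rw [SimpleGraph.mem_edgeSet]
  exact Or.inr (Or.inl ⟨vL r, rfl, rfl⟩)

lemma iEdge_mem_edgeSet {j : Fin (r + 1)} : iEdge r j ∈ (corona (r + 2)).edgeSet := by
  rw [SimpleGraph.mem_edgeSet]
  exact Or.inl ⟨vL r, Fin.castSucc j, fun h => emb1_ne_last r j h.symm, rfl, rfl⟩

lemma map1_matching {s : Finset (Sym2 (Fin (r + 1) ⊕ Fin (r + 1)))}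
    (hs : IsNMatching (corona (r + 1)) n s) :
    IsNMatching (corona (r + 2)) (n + 1) (map1 r n s hs) := by
  have hA := isNMatching_map (emb1_inj r) hs
  refine ⟨?_, ?_, ?_⟩
  · rw [map1, Finset.card_insert_of_notMem pend_not_mem_map, hA.1]
  · intro e he
    rcases Finset.mem_insert.mp he with rfl | he'
    · exact pend_mem_edgeSet
    · exact hA.2.1 e he'
  · intro e he g hg hne v hve hvg
    rcases Finset.mem_insert.mp he with rfl | he' <;>
      rcases Finset.mem_insert.mp hg with rfl | hg'
    · exact absurd rfl hne
    · rcases Sym2.mem_iff.mp hve with rfl | rfl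
      · exact (avoid1 hg').1 hvg
      · exact (avoid1 hg').2 hvg
    · rcases Sym2.mem_iff.mp hvg with rfl | rfl
      · exact (avoid1 he').1 hve
      · exact (avoid1 he').2 hve
    · exact hA.2.2 e he' g hg' hne v hve hvg

lemma map2_matching {s : Finset (Sym2 (Fin (r + 1) ⊕ Fin (r + 1)))}
    (hs : IsNMatching (corona (r + 1)) (n + 1) s) :
    IsNMatching (corona (r + 2)) (n + 1) (map2 r n s) :=
  isNMatching_map (emb1_inj r) hs

lemma map3_matching {j : Fin (r + 1)} {s : Finset (Sym2 (Fin r ⊕ Fin r))}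
    (hs : IsNMatching (corona r) n s) :
    IsNMatching (corona (r + 2)) (n + 1) (map3 r n j s) := by
  have hA := isNMatching_map (emb2_inj r j) hs
  refine ⟨?_, ?_, ?_⟩
  · rw [map3, Finset.card_insert_of_notMem iEdge_not_mem_map, hA.1]
  · intro e he
    rcases Finset.mem_insert.mp he with rfl | he'
    · exact iEdge_mem_edgeSet
    · exact hA.2.1 e he'
  · intro e he g hg hne v hve hvg
    rcases Finset.mem_insert.mp he with rfl | he' <;>
      rcases Finset.mem_insert.mp hg with rfl | hg'
    · exact absurd rfl hne
    · rcases Sym2.mem_iff.mp hve with rfl | rfl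
      · exact (avoid2L hg').1 hvg
      · exact (avoid2j hg').1 hvg
    · rcases Sym2.mem_iff.mp hvg with rfl | rfl
      · exact (avoid2L he').1 hve
      · exact (avoid2j he').1 hve
    · exact hA.2.2 e he' g hg' hne v hve hvg

end Matchings

section Bij

variable (r n : ℕ)

noncomputable def bigMap :
    ({s : Finset (Sym2 (Fin (r + 1) ⊕ Fin (r + 1))) // IsNMatching (corona (r + 1)) n s} ⊕
     {s : Finset (Sym2 (Fin (r + 1) ⊕ Fin (r + 1))) // IsNMatching (corona (r + 1)) (n + 1) s} ⊕
     Fin (r + 1) × {s : Finset (Sym2 (Fin r ⊕ Fin r)) // IsNMatching (corona r) n s}) →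
    {s : Finset (Sym2 (Fin (r + 2) ⊕ Fin (r + 2))) // IsNMatching (corona (r + 2)) (n + 1) s}
  | .inl ⟨s, hs⟩ => ⟨map1 r n s hs, map1_matching hs⟩
  | .inr (.inl ⟨s, hs⟩) => ⟨map2 r n s, map2_matching hs⟩
  | .inr (.inr (j, ⟨s, hs⟩)) => ⟨map3 r n j s, map3_matching hs⟩

lemma pend_ne_iEdge (j : Fin (r + 1)) : pend r ≠ iEdge r j := by
  simp [Sym2.eq_iff]

lemma iEdge_inj {j j' : Fin (r + 1)} (h : iEdge r j = iEdge r j') : j = j' := by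
  rw [Sym2.eq_iff] at h
  rcases h with ⟨-, h⟩ | ⟨h, -⟩
  · exact Fin.castSucc_injective _ (by simpa using h)
  · exact absurd (by simpa using h.symm) (emb1_ne_last r j')

lemma bigMap_inj : Function.Injective (bigMap r n) := by
  classical
  rintro (⟨s, hs⟩ | ⟨s, hs⟩ | ⟨j, s, hs⟩) (⟨s', hs'⟩ | ⟨s', hs'⟩ | ⟨j', s', hs'⟩) heq <;>
    have hv := congrArg Subtype.val heq
  · -- 1,1
    simp only [bigMap, map1] at hv
    have : s.map (eEmb (emb1_inj r)) = s'.map (eEmb (emb1_inj r)) := by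
      rw [← Finset.erase_insert (pend_not_mem_map (s := s)),
        ← Finset.erase_insert (pend_not_mem_map (s := s')), hv]
    obtain rfl := Finset.map_injective _ this
    rfl
  · -- 1,2
    exfalso
    simp only [bigMap, map1, map2] at hv
    have : pend r ∈ s'.map (eEmb (emb1_inj r)) := hv ▸ Finset.mem_insert_self _ _
    exact pend_not_mem_map this
  · -- 1,3
    exfalso
    simp only [bigMap, map1, map3] at hv
    have : pend r ∈ insert (iEdge r j') (s'.map (eEmb (emb2_inj r j'))) :=
      hv ▸ Finset.mem_insert_self _ _
    rcases Finset.mem_insert.mp this with h | h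
    · exact pend_ne_iEdge r j' h
    · exact (avoid2L h).1 (by simp)
  · -- 2,1
    exfalso
    simp only [bigMap, map1, map2] at hv
    have : pend r ∈ s.map (eEmb (emb1_inj r)) := hv.symm ▸ Finset.mem_insert_self _ _
    exact pend_not_mem_map this
  · -- 2,2
    simp only [bigMap, map2] at hv
    obtain rfl := Finset.map_injective _ hv
    rfl
  · -- 2,3
    exfalso
    simp only [bigMap, map2, map3] at hv
    have : iEdge r j' ∈ s.map (eEmb (emb1_inj r)) := hv.symm ▸ Finset.mem_insert_self _ _
    exact (avoid1 this).1 (by simp)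
  · -- 3,1
    exfalso
    simp only [bigMap, map1, map3] at hv
    have : pend r ∈ insert (iEdge r j) (s.map (eEmb (emb2_inj r j))) :=
      hv.symm ▸ Finset.mem_insert_self _ _
    rcases Finset.mem_insert.mp this with h | h
    · exact pend_ne_iEdge r j h
    · exact (avoid2L h).1 (by simp)
  · -- 3,2
    exfalso
    simp only [bigMap, map2, map3] at hv
    have : iEdge r j ∈ s'.map (eEmb (emb1_inj r)) := hv ▸ Finset.mem_insert_self _ _
    exact (avoid1 this).1 (by simp)
  · -- 3,3
    simp only [bigMap, map3] at hv
    have hj : iEdge r j ∈ insert (iEdge r j') (s'.map (eEmb (emb2_inj r j'))) :=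
      hv ▸ Finset.mem_insert_self _ _
    rcases Finset.mem_insert.mp hj with h | h
    case _ =>
      obtain rfl := iEdge_inj r h
      have : s.map (eEmb (emb2_inj r j)) = s'.map (eEmb (emb2_inj r j)) := by
        rw [← Finset.erase_insert (iEdge_not_mem_map (s := s)),
          ← Finset.erase_insert (iEdge_not_mem_map (s := s')), hv]
      obtain rfl := Finset.map_injective _ this
      rfl
    case _ =>
      exact absurd (by simp : inl (vL r) ∈ iEdge r j) (avoid2L h).1

end Bij

section Surj

variable (r n : ℕ)

lemma erase_matching {p m : ℕ} {t : Finset (Sym2 (Fin p ⊕ Fin p))}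
    (ht : IsNMatching (corona p) (m + 1) t) {e : Sym2 (Fin p ⊕ Fin p)} (he : e ∈ t) :
    IsNMatching (corona p) m (t.erase e) := by
  classical
  refine ⟨by rw [Finset.card_erase_of_mem he, ht.1]; rfl, ?_, ?_⟩
  · exact fun f hf => ht.2.1 f (Finset.mem_of_mem_erase hf)
  · exact fun f hf g hg hne => ht.2.2 f (Finset.mem_of_mem_erase hf) g
      (Finset.mem_of_mem_erase hg) hne

lemma bigMap_surj : Function.Surjective (bigMap r n) := by
  classical
  rintro ⟨t, ht⟩
  by_cases h1 : pend r ∈ t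
  · -- case 1: pendant edge at the last vertex
    have ht' : IsNMatching (corona (r + 2)) n (t.erase (pend r)) := erase_matching ht h1
    have hrange : ∀ e ∈ t.erase (pend r), ∀ v ∈ e,
        ∃ u, vMap (Fin.castSucc : Fin (r+1) → Fin (r+2)) u = v := by
      intro e het' v hv
      have het := Finset.mem_of_mem_erase het'
      have hne : e ≠ pend r := Finset.ne_of_mem_erase het'
      cases v with
      | inl i =>
        have hi : i ≠ vL r := by
          rintro rfl
          exact ht.2.2 (pend r) h1 e het (fun h => hne h.symm) (inl (vL r)) (by simp) hv
        obtain ⟨u, hu⟩ := Fin.exists_castSucc_eq.mpr hi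
        exact ⟨inl u, by simp [vMap, hu]⟩
      | inr i =>
        have hi : i ≠ vL r := by
          rintro rfl
          exact hne (pendant_unique (ht.2.1 e het) hv)
        obtain ⟨u, hu⟩ := Fin.exists_castSucc_eq.mpr hi
        exact ⟨inr u, by simp [vMap, hu]⟩
    obtain ⟨s, hs, hmap⟩ := exists_preimage (emb1_inj r) ht' hrange
    refine ⟨.inl ⟨s, hs⟩, Subtype.ext ?_⟩
    show insert (pend r) (s.map (eEmb (emb1_inj r))) = t
    rw [hmap, Finset.insert_erase h1]
  · by_cases h2 : ∃ e ∈ t, inl (vL r) ∈ e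
    · -- case 3: internal edge at the last vertex
      obtain ⟨e, het, hL⟩ := h2
      rcases edge_at_inl (ht.2.1 e het) hL with hpe | ⟨j0, hj0, hee⟩
      · rw [hpe] at het; exact absurd het h1
      · obtain ⟨j, hj⟩ := Fin.exists_castSucc_eq.mpr (fun h : j0 = vL r => hj0 (h ▸ rfl))
        have hj0e : inl j0 ∈ e := by rw [hee]; simp
        have ht' : IsNMatching (corona (r + 2)) n (t.erase e) := erase_matching ht het
        have hrange : ∀ e' ∈ t.erase e, ∀ v ∈ e',
            ∃ u, vMap ((Fin.castSucc : Fin (r+1) → Fin (r+2)) ∘ j.succAbove) u = v := by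
          intro e' he'' v hv
          have he't := Finset.mem_of_mem_erase he''
          have hne : e' ≠ e := Finset.ne_of_mem_erase he''
          have hnL : inl (vL r) ∉ e' :=
            ht.2.2 e het e' he't (fun h => hne h.symm) (inl (vL r)) hL
          have hnj0 : inl j0 ∉ e' :=
            ht.2.2 e het e' he't (fun h => hne h.symm) (inl j0) hj0e
          cases v with
          | inl i =>
            have hi1 : i ≠ vL r := by rintro rfl; exact hnL hv
            have hi2 : i ≠ j0 := by rintro rfl; exact hnj0 hv
            obtain ⟨i', hi'⟩ := Fin.exists_castSucc_eq.mpr hi1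
            have : i' ≠ j := by
              rintro rfl; exact hi2 (hi'.symm.trans hj)
            obtain ⟨k, hk⟩ := Fin.exists_succAbove_eq this
            exact ⟨inl k, by simp [vMap, Function.comp, hk, hi']⟩
          | inr i =>
            have hi1 : i ≠ vL r := by
              rintro rfl
              exact hnL (by rw [pendant_unique (ht.2.1 e' he't) hv]; simp)
            have hi2 : i ≠ j0 := by
              rintro rfl
              exact hnj0 (by rw [pendant_unique (ht.2.1 e' he't) hv]; simp)
            obtain ⟨i', hi'⟩ := Fin.exists_castSucc_eq.mpr hi1
            have : i' ≠ j := by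
              rintro rfl; exact hi2 (hi'.symm.trans hj)
            obtain ⟨k, hk⟩ := Fin.exists_succAbove_eq this
            exact ⟨inr k, by simp [vMap, Function.comp, hk, hi']⟩
        obtain ⟨s, hs, hmap⟩ := exists_preimage (emb2_inj r j) ht' hrange
        refine ⟨.inr (.inr (j, ⟨s, hs⟩)), Subtype.ext ?_⟩
        show insert (iEdge r j) (s.map (eEmb (emb2_inj r j))) = t
        have : iEdge r j = e := by rw [hee, ← hj]
        rw [hmap, this, Finset.insert_erase het]
    · -- case 2: last vertex unmatched
      push_neg at h2
      have hrange : ∀ e ∈ t, ∀ v ∈ e,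
          ∃ u, vMap (Fin.castSucc : Fin (r+1) → Fin (r+2)) u = v := by
        intro e het v hv
        cases v with
        | inl i =>
          have hi : i ≠ vL r := by rintro rfl; exact h2 e het hv
          obtain ⟨u, hu⟩ := Fin.exists_castSucc_eq.mpr hi
          exact ⟨inl u, by simp [vMap, hu]⟩
        | inr i =>
          have hi : i ≠ vL r := by
            rintro rfl
            exact h2 e het (by rw [pendant_unique (ht.2.1 e het) hv]; simp)
          obtain ⟨u, hu⟩ := Fin.exists_castSucc_eq.mpr hi
          exact ⟨inr u, by simp [vMap, hu]⟩
      obtain ⟨s, hs, hmap⟩ := exists_preimage (emb1_inj r) ht hrange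
      exact ⟨.inr (.inl ⟨s, hs⟩), Subtype.ext hmap⟩

end Surj

theorem key_recurrence (r n : ℕ) :
    aNum (r + 2) (n + 1) = aNum (r + 1) n + aNum (r + 1) (n + 1) + (r + 1) * aNum r n := by
  have hbij : Function.Bijective (bigMap r n) := ⟨bigMap_inj r n, bigMap_surj r n⟩
  have h := Nat.card_congr (Equiv.ofBijective _ hbij)
  rw [Nat.card_sum, Nat.card_sum, Nat.card_prod] at h
  have hfin : Nat.card (Fin (r + 1)) = r + 1 := by simp
  rw [hfin] at h
  unfold aNum
  omega


/-- For all integers `p ≥ 2` and `m ≥ 1`, the numbers `a_{p,m}` satisfy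
the recurrence `a_{p,m} = a_{p-1,m-1} + a_{p-1,m} + (p-1)·a_{p-2,m-1}`. -/
theorem aNum_recurrence (p m : ℕ) (hp : 2 ≤ p) (hm : 1 ≤ m) :
    aNum p m = aNum (p - 1) (m - 1) + aNum (p - 1) m + (p - 1) * aNum (p - 2) (m - 1) := by
  obtain ⟨r, rfl⟩ := Nat.exists_eq_add_of_le hp
  obtain ⟨n, rfl⟩ := Nat.exists_eq_add_of_le hm
  rw [show 2 + r - 1 = r + 1 by omega, show 1 + n - 1 = n by omega,
    show 2 + r - 2 = r by omega, show 2 + r = r + 2 by omega, show 1 + n = n + 1 by omega]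
  exact key_recurrence r n
end

section
/- For all integers p ≥ 2 and m ≥ 1, the numbers c_{p,m} satisfy the recurrence c_{p,m} = c_{p−1,m−1} + c_{p−1,m} + 2(p−1)·c_{p−2,m−1}, where by convention c_{p,0} = 1 for all p ≥ 0 and c_{p,m} = 0 when m < 0 or when the corona graph C_p has no m-matching. -/
open Sum Matrix

/-- An edge of the corona graph is internal if both of its endpoints are `v`-vertices. -/
def isInternal {p : ℕ} (e : Sym2 (Fin p ⊕ Fin p)) : Prop :=
  ∀ v ∈ e, Sum.isLeft v = true

open Classical in
/-- `c_{p,m}`: the sum, over the `m`-matchings `S` of the corona graph `C_p`, of `2^{i(S)}`,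
where `i(S)` is the number of internal edges of `S`; equivalently, the number of
`m`-matchings of the double corona graph `C_p^{(2)}`. (For `m = 0` this is `1`, and it is
`0` whenever `C_p` has no `m`-matching.) -/
noncomputable def cNum (p m : ℕ) : ℕ :=
  ∑ s ∈ Finset.univ.filter (fun s : Finset (Sym2 (Fin p ⊕ Fin p)) =>
      IsNMatching (corona p) m s),
    2 ^ (s.filter (fun e => isInternal e)).card

/-! ### Auxiliary lemmas -/

@[simp] lemma corona_adj_inl_inl {p : ℕ} (i j : Fin p) :
    (corona p).Adj (inl i) (inl j) ↔ i ≠ j := by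
  constructor
  · rintro (⟨a, b, h, ha, hb⟩ | ⟨a, ha, hb⟩ | ⟨a, ha, hb⟩) <;> simp_all
  · intro h; exact Or.inl ⟨i, j, h, rfl, rfl⟩

@[simp] lemma corona_adj_inl_inr {p : ℕ} (i j : Fin p) :
    (corona p).Adj (inl i) (inr j) ↔ i = j := by
  constructor
  · rintro (⟨a, b, h, ha, hb⟩ | ⟨a, ha, hb⟩ | ⟨a, ha, hb⟩) <;> simp_all
  · rintro rfl; exact Or.inr (Or.inl ⟨i, rfl, rfl⟩)

@[simp] lemma corona_adj_inr_inl {p : ℕ} (i j : Fin p) :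
    (corona p).Adj (inr i) (inl j) ↔ i = j := by
  constructor
  · rintro (⟨a, b, h, ha, hb⟩ | ⟨a, ha, hb⟩ | ⟨a, ha, hb⟩) <;> simp_all
  · rintro rfl; exact Or.inr (Or.inr ⟨i, rfl, rfl⟩)

@[simp] lemma corona_adj_inr_inr {p : ℕ} (i j : Fin p) :
    ¬ (corona p).Adj (inr i) (inr j) := by
  rintro (⟨a, b, h, ha, hb⟩ | ⟨a, ha, hb⟩ | ⟨a, ha, hb⟩) <;> simp_all

lemma corona_adj_map_s5 {p q : ℕ} (g : Fin q → Fin p) (hg : Function.Injective g)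
    (x y : Fin q ⊕ Fin q) :
    (corona p).Adj (Sum.map g g x) (Sum.map g g y) ↔ (corona q).Adj x y := by
  rcases x with a | a <;> rcases y with b | b <;>
    simp [hg.ne_iff, hg.eq_iff]

lemma isInternal_map {p q : ℕ} (g : Fin q → Fin p) (e : Sym2 (Fin q ⊕ Fin q)) :
    isInternal (e.map (Sum.map g g)) ↔ isInternal e := by
  unfold isInternal
  constructor
  · intro h v hv
    have := h (Sum.map g g v) (Sym2.mem_map.2 ⟨v, hv, rfl⟩)
    rwa [Sum.isLeft_map] at this
  · intro h v hv
    obtain ⟨w, hw, rfl⟩ := Sym2.mem_map.1 hv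
    rw [Sum.isLeft_map]; exact h w hw

open Classical in
lemma cNum_transfer {p q : ℕ} (g : Fin q → Fin p) (hg : Function.Injective g) (m : ℕ) :
    cNum q m = ∑ t ∈ Finset.univ.filter (fun t : Finset (Sym2 (Fin p ⊕ Fin p)) =>
        IsNMatching (corona p) m t ∧ ∀ e ∈ t, ∀ v ∈ e, ∃ w, Sum.map g g w = v),
      2 ^ (t.filter (fun e => isInternal e)).card := by
  classical
  set f : Fin q ⊕ Fin q → Fin p ⊕ Fin p := Sum.map g g with hf_def
  have hf : Function.Injective f := hg.sumMap hg
  have hsym : Function.Injective (Sym2.map f) := Sym2.map.injective hf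
  have hedge : ∀ e : Sym2 (Fin q ⊕ Fin q),
      e.map f ∈ (corona p).edgeSet ↔ e ∈ (corona q).edgeSet := by
    intro e
    induction e using Sym2.ind with
    | _ a b => simpa using corona_adj_map_s5 g hg a b
  unfold cNum
  refine Finset.sum_nbij' (i := fun s => s.image (Sym2.map f))
    (j := fun t => Finset.univ.filter (fun e => Sym2.map f e ∈ t)) ?_ ?_ ?_ ?_ ?_
  · -- forward membership
    intro s hs
    rw [Finset.mem_filter] at hs ⊢
    obtain ⟨-, hcard, hedges, hdisj⟩ := hs
    refine ⟨Finset.mem_univ _, ⟨?_, ?_, ?_⟩, ?_⟩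
    · rw [Finset.card_image_of_injective _ hsym, hcard]
    · intro e he
      obtain ⟨e', he', rfl⟩ := Finset.mem_image.1 he
      exact (hedge e').2 (hedges e' he')
    · intro e he e₂ he₂ hne v hv hv₂
      obtain ⟨e', he', rfl⟩ := Finset.mem_image.1 he
      obtain ⟨e₂', he₂', rfl⟩ := Finset.mem_image.1 he₂
      obtain ⟨w, hw, rfl⟩ := Sym2.mem_map.1 hv
      obtain ⟨w₂, hw₂, hww⟩ := Sym2.mem_map.1 hv₂
      rw [hf hww] at hw₂
      exact hdisj e' he' e₂' he₂' (fun h => hne (by rw [h])) w hw hw₂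
    · intro e he v hv
      obtain ⟨e', he', rfl⟩ := Finset.mem_image.1 he
      obtain ⟨w, hw, rfl⟩ := Sym2.mem_map.1 hv
      exact ⟨w, rfl⟩
  · -- backward membership
    intro t ht
    rw [Finset.mem_filter] at ht ⊢
    obtain ⟨-, ⟨hcard, hedges, hdisj⟩, hsupp⟩ := ht
    have himg : (Finset.univ.filter (fun e => Sym2.map f e ∈ t)).image (Sym2.map f) = t := by
      apply Finset.Subset.antisymm
      · intro e he
        obtain ⟨e', he', rfl⟩ := Finset.mem_image.1 he
        exact (Finset.mem_filter.1 he').2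
      · intro e he
        induction e using Sym2.ind with
        | _ a b =>
          obtain ⟨a', rfl⟩ := hsupp _ he a (Sym2.mem_mk_left a b)
          obtain ⟨b', rfl⟩ := hsupp _ he b (Sym2.mem_mk_right (f a') b)
          exact Finset.mem_image.2 ⟨s(a', b'), Finset.mem_filter.2 ⟨Finset.mem_univ _, he⟩, rfl⟩
    refine ⟨Finset.mem_univ _, ?_, ?_, ?_⟩
    · calc (Finset.univ.filter (fun e => Sym2.map f e ∈ t)).card
          = ((Finset.univ.filter (fun e => Sym2.map f e ∈ t)).image (Sym2.map f)).card :=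
            (Finset.card_image_of_injective _ hsym).symm
        _ = t.card := by rw [himg]
        _ = m := hcard
    · intro e he
      have := hedges _ ((Finset.mem_filter.1 he).2)
      exact (hedge e).1 this
    · intro e he e₂ he₂ hne v hv hv₂
      have h1 := (Finset.mem_filter.1 he).2
      have h2 := (Finset.mem_filter.1 he₂).2
      have hne' : Sym2.map f e ≠ Sym2.map f e₂ := fun h => hne (hsym h)
      exact hdisj _ h1 _ h2 hne' (f v) (Sym2.mem_map.2 ⟨v, hv, rfl⟩)
        (Sym2.mem_map.2 ⟨v, hv₂, rfl⟩)
  · -- j ∘ i = id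
    intro s hs
    ext e
    simp only [Finset.mem_filter, Finset.mem_univ, true_and]
    constructor
    · intro h
      obtain ⟨e', he', heq⟩ := Finset.mem_image.1 h
      rwa [← hsym heq]
    · exact fun h => Finset.mem_image_of_mem _ h
  · -- i ∘ j = id
    intro t ht
    rw [Finset.mem_filter] at ht
    obtain ⟨-, -, hsupp⟩ := ht
    apply Finset.Subset.antisymm
    · intro e he
      obtain ⟨e', he', rfl⟩ := Finset.mem_image.1 he
      exact (Finset.mem_filter.1 he').2
    · intro e he
      induction e using Sym2.ind with
      | _ a b =>
        obtain ⟨a', rfl⟩ := hsupp _ he a (Sym2.mem_mk_left a b)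
        obtain ⟨b', rfl⟩ := hsupp _ he b (Sym2.mem_mk_right (f a') b)
        exact Finset.mem_image.2 ⟨s(a', b'), Finset.mem_filter.2 ⟨Finset.mem_univ _, he⟩, rfl⟩
  · -- weights
    intro s hs
    congr 1
    rw [Finset.filter_image]
    rw [Finset.card_image_of_injective _ hsym]
    congr 1
    apply Finset.filter_congr
    intro e he
    exact (isInternal_map g e).symm

lemma untouched_inr {p : ℕ} {t : Finset (Sym2 (Fin p ⊕ Fin p))}
    (hedges : ∀ e ∈ t, e ∈ (corona p).edgeSet) {a : Fin p}
    (h : ∀ e ∈ t, (inl a : Fin p ⊕ Fin p) ∉ e) :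
    ∀ e ∈ t, (inr a : Fin p ⊕ Fin p) ∉ e := by
  intro e he hv
  have hadj := hedges e he
  induction e using Sym2.ind with
  | _ x y =>
    rw [SimpleGraph.mem_edgeSet] at hadj
    rw [Sym2.mem_iff] at hv
    apply h _ he
    rw [Sym2.mem_iff]
    rcases hv with rfl | rfl
    · rcases y with b | b
      · right
        have : a = b := by simpa using hadj
        rw [this]
      · exact absurd hadj (corona_adj_inr_inr a b)
    · rcases x with b | b
      · left
        have : b = a := by simpa using hadj
        rw [this]
      · exact absurd hadj (corona_adj_inr_inr b a)

open Classical in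
lemma sum_erase_edge {p k : ℕ} (e₀ : Sym2 (Fin p ⊕ Fin p)) (he₀ : e₀ ∈ (corona p).edgeSet) :
    ∑ t ∈ Finset.univ.filter (fun t : Finset (Sym2 (Fin p ⊕ Fin p)) =>
        IsNMatching (corona p) (k+1) t ∧ e₀ ∈ t),
      2 ^ (t.filter (fun e => isInternal e)).card
    = 2 ^ (if isInternal e₀ then 1 else 0) *
      ∑ t ∈ Finset.univ.filter (fun t : Finset (Sym2 (Fin p ⊕ Fin p)) =>
        IsNMatching (corona p) k t ∧ ∀ e ∈ t, ∀ v ∈ e, v ∉ e₀),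
      2 ^ (t.filter (fun e => isInternal e)).card := by
  classical
  rw [Finset.mul_sum]
  refine Finset.sum_nbij' (i := fun t => t.erase e₀) (j := fun t => insert e₀ t) ?_ ?_ ?_ ?_ ?_
  · intro t ht
    rw [Finset.mem_filter] at ht ⊢
    obtain ⟨-, ⟨hcard, hedges, hdisj⟩, hmem⟩ := ht
    refine ⟨Finset.mem_univ _, ⟨?_, ?_, ?_⟩, ?_⟩
    · rw [Finset.card_erase_of_mem hmem, hcard]
      omega
    · exact fun e he => hedges e (Finset.mem_of_mem_erase he)
    · intro e he f hf hne v hv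
      exact hdisj e (Finset.mem_of_mem_erase he) f (Finset.mem_of_mem_erase hf) hne v hv
    · intro e he v hv
      exact hdisj e (Finset.mem_of_mem_erase he) e₀ hmem (Finset.ne_of_mem_erase he) v hv
  · intro t ht
    rw [Finset.mem_filter] at ht ⊢
    obtain ⟨-, ⟨hcard, hedges, hdisj⟩, havoid⟩ := ht
    have hnot : e₀ ∉ t := by
      intro hmem
      induction e₀ using Sym2.ind with
      | _ x y => exact havoid _ hmem x (Sym2.mem_mk_left x y) (Sym2.mem_mk_left x y)
    refine ⟨Finset.mem_univ _, ⟨?_, ?_, ?_⟩, Finset.mem_insert_self _ _⟩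
    · rw [Finset.card_insert_of_notMem hnot, hcard]
    · intro e he
      rcases Finset.mem_insert.1 he with rfl | he'
      · exact he₀
      · exact hedges e he'
    · intro e he f hf hne v hv hvf
      rcases Finset.mem_insert.1 he with rfl | he' <;>
        rcases Finset.mem_insert.1 hf with rfl | hf'
      · exact hne rfl
      · exact havoid f hf' v hvf hv
      · exact havoid e he' v hv hvf
      · exact hdisj e he' f hf' hne v hv hvf
  · intro t ht
    rw [Finset.mem_filter] at ht
    exact Finset.insert_erase ht.2.2
  · intro t ht
    rw [Finset.mem_filter] at ht
    have hnot : e₀ ∉ t := by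
      intro hmem
      induction e₀ using Sym2.ind with
      | _ x y => exact ht.2.2 _ hmem x (Sym2.mem_mk_left x y) (Sym2.mem_mk_left x y)
    exact Finset.erase_insert hnot
  · intro t ht
    rw [Finset.mem_filter] at ht
    obtain ⟨-, -, hmem⟩ := ht
    rw [Finset.filter_erase]
    by_cases h : isInternal e₀
    · rw [if_pos h, pow_one]
      have he₀f : e₀ ∈ t.filter (fun e => isInternal e) := Finset.mem_filter.2 ⟨hmem, h⟩
      have hc := Finset.card_erase_add_one he₀f
      rw [← hc, pow_succ]
      ring
    · rw [if_neg h, pow_zero, one_mul,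
        Finset.erase_eq_of_notMem (fun hc => h (Finset.mem_filter.1 hc).2)]

lemma sum_map_exists_inl {a b : ℕ} (f : Fin a → Fin b) (x : Fin b) :
    (∃ w : Fin a ⊕ Fin a, Sum.map f f w = inl x) ↔ ∃ i, f i = x := by
  constructor
  · rintro ⟨w | w, hw⟩
    · exact ⟨w, by simpa using hw⟩
    · simp at hw
  · rintro ⟨i, hi⟩; exact ⟨inl i, by simp [hi]⟩

lemma sum_map_exists_inr {a b : ℕ} (f : Fin a → Fin b) (x : Fin b) :
    (∃ w : Fin a ⊕ Fin a, Sum.map f f w = inr x) ↔ ∃ i, f i = x := by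
  constructor
  · rintro ⟨w | w, hw⟩
    · simp at hw
    · exact ⟨w, by simpa using hw⟩
  · rintro ⟨i, hi⟩; exact ⟨inr i, by simp [hi]⟩

lemma range_castSucc {n : ℕ} (v : Fin (n+2) ⊕ Fin (n+2)) :
    (∃ w, Sum.map Fin.castSucc Fin.castSucc w = v) ↔
      v ≠ inl (Fin.last (n+1)) ∧ v ≠ inr (Fin.last (n+1)) := by
  rcases v with x | x
  · rw [sum_map_exists_inl, Fin.exists_castSucc_eq]
    simp
  · rw [sum_map_exists_inr, Fin.exists_castSucc_eq]
    simp

lemma exists_gj {n : ℕ} (j : Fin (n+1)) (x : Fin (n+2)) :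
    (∃ i : Fin n, Fin.castSucc (j.succAbove i) = x) ↔
      x ≠ Fin.castSucc j ∧ x ≠ Fin.last (n+1) := by
  constructor
  · rintro ⟨i, rfl⟩
    refine ⟨fun h => j.succAbove_ne i (Fin.castSucc_injective _ h), ?_⟩
    exact Fin.ne_of_lt (Fin.castSucc_lt_last _)
  · rintro ⟨h1, h2⟩
    obtain ⟨y, rfl⟩ := Fin.exists_castSucc_eq.2 h2
    have hy : y ≠ j := fun h => h1 (by rw [h])
    obtain ⟨i, hi⟩ := Fin.exists_succAbove_eq hy
    exact ⟨i, by rw [hi]⟩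

lemma range_gj {n : ℕ} (j : Fin (n+1)) (v : Fin (n+2) ⊕ Fin (n+2)) :
    (∃ w, Sum.map (fun i : Fin n => Fin.castSucc (j.succAbove i))
        (fun i : Fin n => Fin.castSucc (j.succAbove i)) w = v) ↔
      v ≠ inl (Fin.castSucc j) ∧ v ≠ inr (Fin.castSucc j) ∧
        v ≠ inl (Fin.last (n+1)) ∧ v ≠ inr (Fin.last (n+1)) := by
  rcases v with x | x
  · rw [sum_map_exists_inl, exists_gj]
    simp [and_comm]
  · rw [sum_map_exists_inr, exists_gj]
    simp [and_comm]

set_option maxHeartbeats 2000000 in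
/-- For all integers `p ≥ 2` and `m ≥ 1`, the numbers `c_{p,m}` satisfy
the recurrence `c_{p,m} = c_{p-1,m-1} + c_{p-1,m} + 2(p-1)·c_{p-2,m-1}`. -/
theorem cNum_recurrence (p m : ℕ) (hp : 2 ≤ p) (hm : 1 ≤ m) :
    cNum p m = cNum (p - 1) (m - 1) + cNum (p - 1) m + 2 * (p - 1) * cNum (p - 2) (m - 1) := by
  classical
  obtain ⟨n, rfl⟩ : ∃ n, p = n + 2 := ⟨p - 2, by omega⟩
  obtain ⟨k, rfl⟩ : ∃ k, m = k + 1 := ⟨m - 1, by omega⟩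
  show cNum (n+2) (k+1) = cNum (n+1) k + cNum (n+1) (k+1) + 2 * (n+1) * cNum n k
  have hsplit : (Finset.univ.filter (fun t : Finset (Sym2 (Fin (n+2) ⊕ Fin (n+2))) =>
        IsNMatching (corona (n+2)) (k+1) t))
      = Finset.univ.filter (fun t => IsNMatching (corona (n+2)) (k+1) t ∧
          ∀ e ∈ t, (inl (Fin.last (n+1)) : Fin (n+2) ⊕ Fin (n+2)) ∉ e)
        ∪ (Finset.univ.filter (fun t => IsNMatching (corona (n+2)) (k+1) t ∧
            s(inl (Fin.last (n+1)), (inr (Fin.last (n+1)) : Fin (n+2) ⊕ Fin (n+2))) ∈ t)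
          ∪ Finset.univ.filter (fun t => IsNMatching (corona (n+2)) (k+1) t ∧
            ∃ j : Fin (n+1), s((inl (Fin.last (n+1)) : Fin (n+2) ⊕ Fin (n+2)),
              inl j.castSucc) ∈ t)) := by
    rw [← Finset.filter_or, ← Finset.filter_or]
    apply Finset.filter_congr
    intro t _
    constructor
    · intro hM
      by_cases hA : ∀ e ∈ t, (inl (Fin.last (n+1)) : Fin (n+2) ⊕ Fin (n+2)) ∉ e
      · exact Or.inl ⟨hM, hA⟩
      · push_neg at hA
        obtain ⟨e, he, hLe⟩ := hA
        right
        have hadj := hM.2.1 e he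
        have key : e = s(inl (Fin.last (n+1)), (inr (Fin.last (n+1)) : Fin (n+2) ⊕ Fin (n+2)))
            ∨ ∃ j : Fin (n+1), e = s((inl (Fin.last (n+1)) : Fin (n+2) ⊕ Fin (n+2)),
              inl j.castSucc) := by
          induction e using Sym2.ind with
          | _ x y =>
            rw [SimpleGraph.mem_edgeSet] at hadj
            rw [Sym2.mem_iff] at hLe
            rcases hLe with hx | hy
            · subst hx
              rcases y with b | b
              · have hb : Fin.last (n+1) ≠ b := by simpa using hadj
                obtain ⟨j, rfl⟩ := Fin.exists_castSucc_eq.2 (Ne.symm hb)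
                exact Or.inr ⟨j, rfl⟩
              · have hb : Fin.last (n+1) = b := by simpa using hadj
                subst hb
                exact Or.inl rfl
            · subst hy
              rw [Sym2.eq_swap]
              rcases x with b | b
              · have hb : b ≠ Fin.last (n+1) := by simpa using hadj
                obtain ⟨j, rfl⟩ := Fin.exists_castSucc_eq.2 hb
                exact Or.inr ⟨j, rfl⟩
              · have hb : b = Fin.last (n+1) := by simpa using hadj
                subst hb
                exact Or.inl rfl
        rcases key with rfl | ⟨j, rfl⟩
        · exact Or.inl ⟨hM, he⟩
        · exact Or.inr ⟨hM, j, he⟩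
    · rintro (⟨hM, -⟩ | ⟨hM, -⟩ | ⟨hM, -⟩) <;> exact hM
  -- disjointness
  have d2 : Disjoint
      (Finset.univ.filter (fun t : Finset (Sym2 (Fin (n+2) ⊕ Fin (n+2))) =>
        IsNMatching (corona (n+2)) (k+1) t ∧
          s(inl (Fin.last (n+1)), (inr (Fin.last (n+1)) : Fin (n+2) ⊕ Fin (n+2))) ∈ t))
      (Finset.univ.filter (fun t => IsNMatching (corona (n+2)) (k+1) t ∧
        ∃ j : Fin (n+1), s((inl (Fin.last (n+1)) : Fin (n+2) ⊕ Fin (n+2)),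
          inl j.castSucc) ∈ t)) := by
    rw [Finset.disjoint_left]
    intro t ht1 ht2
    rw [Finset.mem_filter] at ht1 ht2
    obtain ⟨-, hM, h1⟩ := ht1
    obtain ⟨-, -, j, h2⟩ := ht2
    have hne : s(inl (Fin.last (n+1)), (inr (Fin.last (n+1)) : Fin (n+2) ⊕ Fin (n+2)))
        ≠ s((inl (Fin.last (n+1)) : Fin (n+2) ⊕ Fin (n+2)), inl j.castSucc) := by
      intro h
      rw [Sym2.eq_iff] at h
      rcases h with ⟨-, h⟩ | ⟨h, -⟩
      · simp at h
      · rw [Sum.inl.injEq] at h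
        exact (Fin.castSucc_lt_last j).ne h.symm
    exact hM.2.2 _ h1 _ h2 hne _ (Sym2.mem_mk_left _ _) (Sym2.mem_mk_left _ _)
  have d1 : Disjoint
      (Finset.univ.filter (fun t : Finset (Sym2 (Fin (n+2) ⊕ Fin (n+2))) =>
        IsNMatching (corona (n+2)) (k+1) t ∧
          ∀ e ∈ t, (inl (Fin.last (n+1)) : Fin (n+2) ⊕ Fin (n+2)) ∉ e))
      ((Finset.univ.filter (fun t => IsNMatching (corona (n+2)) (k+1) t ∧
          s(inl (Fin.last (n+1)), (inr (Fin.last (n+1)) : Fin (n+2) ⊕ Fin (n+2))) ∈ t))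
        ∪ Finset.univ.filter (fun t => IsNMatching (corona (n+2)) (k+1) t ∧
          ∃ j : Fin (n+1), s((inl (Fin.last (n+1)) : Fin (n+2) ⊕ Fin (n+2)),
            inl j.castSucc) ∈ t)) := by
    rw [Finset.disjoint_left]
    intro t ht1 ht2
    rw [Finset.mem_filter] at ht1
    obtain ⟨-, -, hA⟩ := ht1
    rcases Finset.mem_union.1 ht2 with h | h <;> rw [Finset.mem_filter] at h
    · exact hA _ h.2.2 (Sym2.mem_mk_left _ _)
    · obtain ⟨-, -, j, hj⟩ := h
      exact hA _ hj (Sym2.mem_mk_left _ _)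
  have lhs_eq : cNum (n+2) (k+1)
      = (∑ t ∈ Finset.univ.filter (fun t : Finset (Sym2 (Fin (n+2) ⊕ Fin (n+2))) =>
          IsNMatching (corona (n+2)) (k+1) t ∧
            ∀ e ∈ t, (inl (Fin.last (n+1)) : Fin (n+2) ⊕ Fin (n+2)) ∉ e),
          2 ^ (t.filter (fun e => isInternal e)).card)
        + ((∑ t ∈ Finset.univ.filter (fun t => IsNMatching (corona (n+2)) (k+1) t ∧
            s(inl (Fin.last (n+1)), (inr (Fin.last (n+1)) : Fin (n+2) ⊕ Fin (n+2))) ∈ t),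
            2 ^ (t.filter (fun e => isInternal e)).card)
          + (∑ t ∈ Finset.univ.filter (fun t => IsNMatching (corona (n+2)) (k+1) t ∧
              ∃ j : Fin (n+1), s((inl (Fin.last (n+1)) : Fin (n+2) ⊕ Fin (n+2)),
                inl j.castSucc) ∈ t),
              2 ^ (t.filter (fun e => isInternal e)).card)) := by
    rw [cNum, hsplit, Finset.sum_union d1, Finset.sum_union d2]
  rw [lhs_eq]
  have hA : (∑ t ∈ Finset.univ.filter (fun t : Finset (Sym2 (Fin (n+2) ⊕ Fin (n+2))) =>
        IsNMatching (corona (n+2)) (k+1) t ∧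
          ∀ e ∈ t, (inl (Fin.last (n+1)) : Fin (n+2) ⊕ Fin (n+2)) ∉ e),
        2 ^ (t.filter (fun e => isInternal e)).card) = cNum (n+1) (k+1) := by
    rw [cNum_transfer (Fin.castSucc : Fin (n+1) → Fin (n+2)) (Fin.castSucc_injective _) (k+1)]
    refine (Finset.sum_congr ?_ (fun _ _ => rfl)).symm
    apply Finset.filter_congr
    intro t _
    refine (and_congr_right fun hM => ?_).symm
    constructor
    · intro hnoL
      have hnoR := untouched_inr hM.2.1 hnoL
      intro e he v hv
      rw [range_castSucc]
      exact ⟨fun h => hnoL e he (h ▸ hv), fun h => hnoR e he (h ▸ hv)⟩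
    · intro hsupp e he hLe
      exact ((range_castSucc _).1 (hsupp e he _ hLe)).1 rfl
  have hB : (∑ t ∈ Finset.univ.filter (fun t : Finset (Sym2 (Fin (n+2) ⊕ Fin (n+2))) =>
        IsNMatching (corona (n+2)) (k+1) t ∧
          s(inl (Fin.last (n+1)), (inr (Fin.last (n+1)) : Fin (n+2) ⊕ Fin (n+2))) ∈ t),
        2 ^ (t.filter (fun e => isInternal e)).card) = cNum (n+1) k := by
    have hedge : s(inl (Fin.last (n+1)), (inr (Fin.last (n+1)) : Fin (n+2) ⊕ Fin (n+2)))
        ∈ (corona (n+2)).edgeSet := by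
      rw [SimpleGraph.mem_edgeSet]; simp
    rw [sum_erase_edge _ hedge]
    have hint : ¬ isInternal
        (s(inl (Fin.last (n+1)), (inr (Fin.last (n+1)) : Fin (n+2) ⊕ Fin (n+2)))) := by
      intro h
      have := h _ (Sym2.mem_mk_right _ _)
      simp at this
    rw [if_neg hint, pow_zero, one_mul,
      cNum_transfer (Fin.castSucc : Fin (n+1) → Fin (n+2)) (Fin.castSucc_injective _) k]
    refine (Finset.sum_congr ?_ (fun _ _ => rfl)).symm
    apply Finset.filter_congr
    intro t _
    refine (and_congr_right fun hM => ?_).symm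
    constructor
    · intro havoid e he v hv
      rw [range_castSucc]
      have h := havoid e he v hv
      rw [Sym2.mem_iff] at h
      push_neg at h
      exact h
    · intro hsupp e he v hv
      rw [Sym2.mem_iff]
      push_neg
      exact (range_castSucc v).1 (hsupp e he v hv)
  have hC : (∑ t ∈ Finset.univ.filter (fun t : Finset (Sym2 (Fin (n+2) ⊕ Fin (n+2))) =>
        IsNMatching (corona (n+2)) (k+1) t ∧
          ∃ j : Fin (n+1), s((inl (Fin.last (n+1)) : Fin (n+2) ⊕ Fin (n+2)),
            inl j.castSucc) ∈ t),
        2 ^ (t.filter (fun e => isInternal e)).card) = 2 * (n+1) * cNum n k := by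
    have hpd : Set.PairwiseDisjoint ↑(Finset.univ : Finset (Fin (n+1)))
        (fun j : Fin (n+1) => Finset.univ.filter
          (fun t : Finset (Sym2 (Fin (n+2) ⊕ Fin (n+2))) =>
            IsNMatching (corona (n+2)) (k+1) t ∧
              s((inl (Fin.last (n+1)) : Fin (n+2) ⊕ Fin (n+2)), inl j.castSucc) ∈ t)) := by
      intro a _ b _ hab
      apply Finset.disjoint_left.2
      intro t ht1 ht2
      rw [Finset.mem_filter] at ht1 ht2
      obtain ⟨-, hM, h1⟩ := ht1
      obtain ⟨-, -, h2⟩ := ht2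
      have hne : s((inl (Fin.last (n+1)) : Fin (n+2) ⊕ Fin (n+2)), inl a.castSucc)
          ≠ s((inl (Fin.last (n+1)) : Fin (n+2) ⊕ Fin (n+2)), inl b.castSucc) := by
        intro h
        rw [Sym2.eq_iff] at h
        rcases h with ⟨-, h⟩ | ⟨h, -⟩ <;> rw [Sum.inl.injEq] at h
        · exact hab (Fin.castSucc_injective _ h)
        · exact (Fin.castSucc_lt_last b).ne' h
      exact hM.2.2 _ h1 _ h2 hne _ (Sym2.mem_mk_left _ _) (Sym2.mem_mk_left _ _)
    have hbi : Finset.univ.filter (fun t : Finset (Sym2 (Fin (n+2) ⊕ Fin (n+2))) =>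
          IsNMatching (corona (n+2)) (k+1) t ∧
            ∃ j : Fin (n+1), s((inl (Fin.last (n+1)) : Fin (n+2) ⊕ Fin (n+2)),
              inl j.castSucc) ∈ t)
        = Finset.univ.biUnion (fun j : Fin (n+1) => Finset.univ.filter
            (fun t : Finset (Sym2 (Fin (n+2) ⊕ Fin (n+2))) =>
              IsNMatching (corona (n+2)) (k+1) t ∧
                s((inl (Fin.last (n+1)) : Fin (n+2) ⊕ Fin (n+2)), inl j.castSucc) ∈ t)) := by
      ext t
      simp only [Finset.mem_biUnion, Finset.mem_filter, Finset.mem_univ, true_and]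
      constructor
      · rintro ⟨hM, j, hj⟩; exact ⟨j, hM, hj⟩
      · rintro ⟨j, hM, hj⟩; exact ⟨hM, j, hj⟩
    rw [hbi, Finset.sum_biUnion hpd]
    have hper : ∀ j : Fin (n+1),
        (∑ t ∈ Finset.univ.filter
            (fun t : Finset (Sym2 (Fin (n+2) ⊕ Fin (n+2))) =>
              IsNMatching (corona (n+2)) (k+1) t ∧
                s((inl (Fin.last (n+1)) : Fin (n+2) ⊕ Fin (n+2)), inl j.castSucc) ∈ t),
          2 ^ (t.filter (fun e => isInternal e)).card) = 2 * cNum n k := by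
      intro j
      have hinj : Function.Injective (fun i : Fin n => Fin.castSucc (j.succAbove i)) :=
        (Fin.castSucc_injective _).comp (Fin.succAbove_right_injective)
      have hedgej : s((inl (Fin.last (n+1)) : Fin (n+2) ⊕ Fin (n+2)), inl j.castSucc)
          ∈ (corona (n+2)).edgeSet := by
        rw [SimpleGraph.mem_edgeSet, corona_adj_inl_inl]
        exact (Fin.castSucc_lt_last j).ne'
      rw [sum_erase_edge _ hedgej]
      have hint : isInternal
          (s((inl (Fin.last (n+1)) : Fin (n+2) ⊕ Fin (n+2)), inl j.castSucc)) := by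
        intro v hv
        rw [Sym2.mem_iff] at hv
        rcases hv with rfl | rfl <;> rfl
      rw [if_pos hint, pow_one]
      congr 1
      rw [cNum_transfer (fun i : Fin n => Fin.castSucc (j.succAbove i)) hinj k]
      refine (Finset.sum_congr ?_ (fun _ _ => rfl)).symm
      apply Finset.filter_congr
      intro t _
      refine (and_congr_right fun hM => ?_).symm
      constructor
      · intro havoid
        have hnoL : ∀ e ∈ t, (inl (Fin.last (n+1)) : Fin (n+2) ⊕ Fin (n+2)) ∉ e :=
          fun e he hv => havoid e he _ hv (Sym2.mem_mk_left _ _)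
        have hnoJ : ∀ e ∈ t, (inl j.castSucc : Fin (n+2) ⊕ Fin (n+2)) ∉ e :=
          fun e he hv => havoid e he _ hv (Sym2.mem_mk_right _ _)
        have hnoR := untouched_inr hM.2.1 hnoL
        have hnoJr := untouched_inr hM.2.1 hnoJ
        intro e he v hv
        rw [range_gj]
        exact ⟨fun h => hnoJ e he (h ▸ hv), fun h => hnoJr e he (h ▸ hv),
          fun h => hnoL e he (h ▸ hv), fun h => hnoR e he (h ▸ hv)⟩
      · intro hsupp e he v hv hv0
        obtain ⟨h1, -, h3, -⟩ := (range_gj j v).1 (hsupp e he v hv)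
        rw [Sym2.mem_iff] at hv0
        rcases hv0 with rfl | rfl
        · exact h3 rfl
        · exact h1 rfl
    rw [Finset.sum_congr rfl (fun j _ => hper j), Finset.sum_const, Finset.card_univ,
      Fintype.card_fin, smul_eq_mul]
    ring
  rw [hA, hB, hC]
  ring
end

section
/- Fix an integer p > 0. The sequence (a_{p,m})_{0 ≤ m ≤ p} is symmetric and unimodal: a_{p,m} = a_{p,p−m} for all 0 ≤ m ≤ p, and a_{p,m−1} ≤ a_{p,m} whenever 1 ≤ m and 2m ≤ p (hence, by symmetry, a_{p,m} ≥ a_{p,m+1} whenever 2m ≥ p and m+1 ≤ p). -/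
open Sum Matrix

noncomputable section CoronaAux
namespace CoronaAux
open Finset
open scoped Classical

variable {p : ℕ}

def ι (e : Sym2 (Fin p)) : Sym2 (Fin p ⊕ Fin p) := Sym2.map inl e

def pend (i : Fin p) : Sym2 (Fin p ⊕ Fin p) := s(inl i, inr i)

lemma ι_inj : Function.Injective (ι (p := p)) :=
  Sym2.map.injective inl_injective

lemma inl_mem_ι {a : Fin p} {e : Sym2 (Fin p)} : (inl a : Fin p ⊕ Fin p) ∈ ι e ↔ a ∈ e := by
  simp [ι, Sym2.mem_map]

lemma mem_ι {v : Fin p ⊕ Fin p} {e : Sym2 (Fin p)} (h : v ∈ ι e) :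
    ∃ a, a ∈ e ∧ v = inl a := by
  rw [ι, Sym2.mem_map] at h
  obtain ⟨a, ha, rfl⟩ := h
  exact ⟨a, ha, rfl⟩

lemma mem_pend {v : Fin p ⊕ Fin p} {i : Fin p} : v ∈ pend i ↔ v = inl i ∨ v = inr i := by
  simp [pend]

lemma ι_ne_pend (e : Sym2 (Fin p)) (i : Fin p) : ι e ≠ pend i := by
  intro h
  have hm : (inr i : Fin p ⊕ Fin p) ∈ ι e := by rw [h, mem_pend]; right; rfl
  obtain ⟨a, _, ha⟩ := mem_ι hm
  simp at ha

lemma pend_inj : Function.Injective (pend (p := p)) := by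
  intro i j h
  have : (inl i : Fin p ⊕ Fin p) ∈ pend j := by rw [← h, mem_pend]; left; rfl
  rw [mem_pend] at this
  simpa using this

/-- `t` is an internal matching: a set of non-diagonal, pairwise disjoint `Sym2`s. -/
def IsIM (t : Finset (Sym2 (Fin p))) : Prop :=
  (∀ e ∈ t, ¬ e.IsDiag) ∧ ∀ e ∈ t, ∀ f ∈ t, e ≠ f → ∀ v, v ∈ e → v ∉ f

def cover (t : Finset (Sym2 (Fin p))) : Finset (Fin p) :=
  Finset.univ.filter (fun i => ∃ e ∈ t, i ∈ e)

lemma filter_mem_card {e : Sym2 (Fin p)} (he : ¬ e.IsDiag) :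
    (Finset.univ.filter (· ∈ e)).card = 2 := by
  induction e with
  | _ a b =>
    rw [Sym2.mk_isDiag_iff] at he
    have h2 : Finset.univ.filter (· ∈ s(a, b)) = {a, b} := by
      ext i; simp [Sym2.mem_iff]
    rw [h2, card_insert_of_notMem (by simpa using he), card_singleton]

lemma cover_card {t : Finset (Sym2 (Fin p))} (ht : IsIM t) : (cover t).card = 2 * t.card := by
  have hc : cover t = t.biUnion (fun e => Finset.univ.filter (· ∈ e)) := by
    ext i; simp [cover]
  rw [hc, card_biUnion]
  · rw [Finset.sum_congr rfl (fun e he => filter_mem_card (ht.1 e he)), Finset.sum_const,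
      smul_eq_mul, mul_comm]
  · intro e he f hf hef
    rw [Function.onFun_apply, Finset.disjoint_left]
    intro i hi hif
    rw [mem_filter] at hi hif
    exact ht.2 e he f hf hef i hi.2 hif.2

lemma two_mul_card_le {t : Finset (Sym2 (Fin p))} (ht : IsIM t) : 2 * t.card ≤ p := by
  rw [← cover_card ht]
  simpa using (cover t).card_le_univ

lemma ι_mem_edgeSet {e : Sym2 (Fin p)} (he : ¬ e.IsDiag) : ι e ∈ (corona p).edgeSet := by
  induction e with
  | _ a b =>
    rw [Sym2.mk_isDiag_iff] at he
    have : ι s(a, b) = s(inl a, inl b) := rfl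
    rw [this, SimpleGraph.mem_edgeSet]
    exact Or.inl ⟨a, b, he, rfl, rfl⟩

lemma pend_mem_edgeSet (i : Fin p) : pend i ∈ (corona p).edgeSet := by
  rw [pend, SimpleGraph.mem_edgeSet]
  exact Or.inr (Or.inl ⟨i, rfl, rfl⟩)

lemma edge_cases {e : Sym2 (Fin p ⊕ Fin p)} (he : e ∈ (corona p).edgeSet) :
    (∃ e' : Sym2 (Fin p), ¬ e'.IsDiag ∧ e = ι e') ∨ ∃ i, e = pend i := by
  induction e with
  | _ x y =>
    rw [SimpleGraph.mem_edgeSet] at he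
    rcases he with ⟨i, j, hij, rfl, rfl⟩ | ⟨i, rfl, rfl⟩ | ⟨i, rfl, rfl⟩
    · exact Or.inl ⟨s(i, j), by simp [hij], rfl⟩
    · exact Or.inr ⟨i, rfl⟩
    · exact Or.inr ⟨i, Sym2.eq_swap⟩

def F (x : Finset (Sym2 (Fin p)) × Finset (Fin p)) : Finset (Sym2 (Fin p ⊕ Fin p)) :=
  x.1.image ι ∪ x.2.image pend

lemma ι_mem_F {x : Finset (Sym2 (Fin p)) × Finset (Fin p)} {e : Sym2 (Fin p)} :
    ι e ∈ F x ↔ e ∈ x.1 := by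
  simp only [F, mem_union, mem_image]
  constructor
  · rintro (⟨f, hf, h⟩ | ⟨i, _, h⟩)
    · rwa [← ι_inj h]
    · exact absurd h.symm (ι_ne_pend _ _)
  · exact fun h => Or.inl ⟨e, h, rfl⟩

lemma pend_mem_F {x : Finset (Sym2 (Fin p)) × Finset (Fin p)} {i : Fin p} :
    pend i ∈ F x ↔ i ∈ x.2 := by
  simp only [F, mem_union, mem_image]
  constructor
  · rintro (⟨f, _, h⟩ | ⟨j, hj, h⟩)
    · exact absurd h (ι_ne_pend _ _)
    · rwa [← pend_inj h]
  · exact fun h => Or.inr ⟨i, h, rfl⟩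

lemma mem_F {x : Finset (Sym2 (Fin p)) × Finset (Fin p)} {e : Sym2 (Fin p ⊕ Fin p)} :
    e ∈ F x ↔ (∃ e' ∈ x.1, e = ι e') ∨ ∃ i ∈ x.2, e = pend i := by
  simp only [F, mem_union, mem_image]
  constructor
  · rintro (⟨f, hf, h⟩ | ⟨i, hi, h⟩)
    · exact Or.inl ⟨f, hf, h.symm⟩
    · exact Or.inr ⟨i, hi, h.symm⟩
  · rintro (⟨f, hf, h⟩ | ⟨i, hi, h⟩)
    · exact Or.inl ⟨f, hf, h.symm⟩
    · exact Or.inr ⟨i, hi, h.symm⟩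

lemma card_F (x : Finset (Sym2 (Fin p)) × Finset (Fin p)) :
    (F x).card = x.1.card + x.2.card := by
  rw [F, card_union_of_disjoint, card_image_of_injective _ ι_inj,
    card_image_of_injective _ pend_inj]
  rw [Finset.disjoint_left]
  rintro e he hf
  rw [mem_image] at he hf
  obtain ⟨f, _, rfl⟩ := he
  obtain ⟨i, _, h⟩ := hf
  exact ι_ne_pend f i h.symm

def pairsF (p m : ℕ) : Finset (Finset (Sym2 (Fin p)) × Finset (Fin p)) :=
  Finset.univ.filter (fun x => IsIM x.1 ∧ (∀ e ∈ x.1, ∀ i ∈ x.2, i ∉ e) ∧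
    x.1.card + x.2.card = m)

def matchF (p m : ℕ) : Finset (Finset (Sym2 (Fin p ⊕ Fin p))) :=
  Finset.univ.filter (IsNMatching (corona p) m)

lemma F_mem_matchF {m : ℕ} {x : Finset (Sym2 (Fin p)) × Finset (Fin p)}
    (hx : x ∈ pairsF p m) : F x ∈ matchF p m := by
  rw [pairsF, mem_filter] at hx
  obtain ⟨-, ⟨hdiag, hmatch⟩, hdisj, hcard⟩ := hx
  rw [matchF, mem_filter]
  refine ⟨mem_univ _, (card_F x).trans hcard, ?_, ?_⟩
  · intro e he
    rcases mem_F.1 he with ⟨e', he', rfl⟩ | ⟨i, _, rfl⟩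
    · exact ι_mem_edgeSet (hdiag e' he')
    · exact pend_mem_edgeSet i
  · intro e he f hf hef v hv hvf
    rcases mem_F.1 he with ⟨e₁, he₁, rfl⟩ | ⟨i, hi, rfl⟩ <;>
      rcases mem_F.1 hf with ⟨e₂, he₂, rfl⟩ | ⟨j, hj, rfl⟩
    · obtain ⟨a, ha, rfl⟩ := mem_ι hv
      exact hmatch e₁ he₁ e₂ he₂ (fun h => hef (by rw [h])) a ha (inl_mem_ι.1 hvf)
    · obtain ⟨a, ha, rfl⟩ := mem_ι hv
      rcases mem_pend.1 hvf with h | h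
      · exact hdisj e₁ he₁ j hj (by rwa [inl_injective h] at ha)
      · simp at h
    · obtain ⟨a, ha, rfl⟩ := mem_ι hvf
      rcases mem_pend.1 hv with h | h
      · exact hdisj e₂ he₂ i hi (by rwa [inl_injective h] at ha)
      · simp at h
    · have hij : i ≠ j := fun h => hef (by rw [h])
      rcases mem_pend.1 hv with h | h <;> rcases mem_pend.1 hvf with h' | h' <;>
        rw [h] at h' <;> simp_all

def G (s : Finset (Sym2 (Fin p ⊕ Fin p))) : Finset (Sym2 (Fin p)) × Finset (Fin p) :=
  (Finset.univ.filter (fun e => ι e ∈ s), Finset.univ.filter (fun i => pend i ∈ s))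

lemma F_G {m : ℕ} {s : Finset (Sym2 (Fin p ⊕ Fin p))} (hs : s ∈ matchF p m) :
    F (G s) = s := by
  rw [matchF, mem_filter] at hs
  obtain ⟨-, -, hedge, -⟩ := hs
  ext e
  rw [mem_F]
  constructor
  · rintro (⟨e', he', rfl⟩ | ⟨i, hi, rfl⟩)
    · exact (mem_filter.1 he').2
    · exact (mem_filter.1 hi).2
  · intro he
    rcases edge_cases (hedge e he) with ⟨e', _, rfl⟩ | ⟨i, rfl⟩
    · exact Or.inl ⟨e', mem_filter.2 ⟨mem_univ _, he⟩, rfl⟩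
    · exact Or.inr ⟨i, mem_filter.2 ⟨mem_univ _, he⟩, rfl⟩

lemma G_mem_pairsF {m : ℕ} {s : Finset (Sym2 (Fin p ⊕ Fin p))} (hs : s ∈ matchF p m) :
    G s ∈ pairsF p m := by
  have hFG := F_G hs
  rw [matchF, mem_filter] at hs
  obtain ⟨-, hcard, hedge, hmatch⟩ := hs
  rw [pairsF, mem_filter]
  refine ⟨mem_univ _, ⟨?_, ?_⟩, ?_, ?_⟩
  · intro e he hd
    have hE := hedge _ (mem_filter.1 he).2
    induction e with
    | _ a b =>
      rw [Sym2.mk_isDiag_iff] at hd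
      subst hd
      rw [show ι s(a, a) = s(inl a, inl a) from by simp [ι],
        SimpleGraph.mem_edgeSet] at hE
      exact (corona p).loopless.irrefl _ hE
  · intro e he f hf hef v hv hvf
    exact hmatch _ (mem_filter.1 he).2 _ (mem_filter.1 hf).2
      (fun h => hef (ι_inj h)) (inl v) (inl_mem_ι.2 hv) (inl_mem_ι.2 hvf)
  · intro e he i hi hie
    exact hmatch _ (mem_filter.1 he).2 _ (mem_filter.1 hi).2
      (ι_ne_pend e i) (inl i) (inl_mem_ι.2 hie) (mem_pend.2 (Or.inl rfl))
  · rw [← card_F (G s), hFG, hcard]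

lemma G_F {m : ℕ} {x : Finset (Sym2 (Fin p)) × Finset (Fin p)}
    (hx : x ∈ pairsF p m) : G (F x) = x := by
  have h1 : (G (F x)).1 = x.1 := by
    ext e; simp only [G, mem_filter, mem_univ, true_and]; exact ι_mem_F
  have h2 : (G (F x)).2 = x.2 := by
    ext i; simp only [G, mem_filter, mem_univ, true_and]; exact pend_mem_F
  exact Prod.ext h1 h2

lemma pairsF_card_eq (p m : ℕ) : (pairsF p m).card = (matchF p m).card :=
  Finset.card_bij' (fun x _ => F x) (fun s _ => G s) (fun x hx => F_mem_matchF hx)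
    (fun s hs => G_mem_pairsF hs) (fun x hx => G_F hx) (fun s hs => F_G hs)

def IMs (p : ℕ) : Finset (Finset (Sym2 (Fin p))) := Finset.univ.filter IsIM

def w (p m : ℕ) (t : Finset (Sym2 (Fin p))) : ℕ :=
  if t.card ≤ m then (p - 2 * t.card).choose (m - t.card) else 0

lemma fiber_card {m : ℕ} {t : Finset (Sym2 (Fin p))} (ht : IsIM t) :
    ((pairsF p m).filter (fun x => x.1 = t)).card = w p m t := by
  rw [w]
  split_ifs with h
  · have hcompl : ((cover t)ᶜ : Finset (Fin p)).card = p - 2 * t.card := by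
      rw [Finset.card_compl, cover_card ht]
      simp
    rw [← hcompl, ← card_powersetCard]
    refine Finset.card_bij' (fun x _ => x.2) (fun T _ => (t, T)) ?_ ?_ ?_ ?_
    · intro x hx
      rw [mem_filter, pairsF, mem_filter] at hx
      obtain ⟨⟨-, -, hdisj, hcard⟩, h1⟩ := hx
      rw [mem_powersetCard]
      constructor
      · intro i hi
        rw [Finset.mem_compl, cover, mem_filter]
        rintro ⟨-, e, he, hie⟩
        exact hdisj e (h1 ▸ he) i hi hie
      · show x.2.card = m - t.card
        rw [h1] at hcard
        omega
    · intro T hT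
      rw [mem_powersetCard] at hT
      obtain ⟨hsub, hTcard⟩ := hT
      rw [mem_filter, pairsF, mem_filter]
      refine ⟨⟨mem_univ _, ht, ?_, show t.card + T.card = m by omega⟩, by show (t, T).1 = t; rfl⟩
      intro e he i hi hie
      have := hsub hi
      rw [Finset.mem_compl, cover, mem_filter] at this
      exact this ⟨mem_univ _, e, he, hie⟩
    · intro x hx
      rw [mem_filter] at hx
      exact Prod.ext hx.2.symm rfl
    · intro T _
      rfl
  · rw [Finset.card_eq_zero, Finset.filter_eq_empty_iff]
    intro x hx
    rw [pairsF, mem_filter] at hx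
    intro h1
    rw [h1] at hx
    exact h (by omega)

lemma matchF_card_formula (p m : ℕ) :
    (matchF p m).card = ∑ t ∈ IMs p, w p m t := by
  rw [← pairsF_card_eq, Finset.card_eq_sum_card_fiberwise
    (f := Prod.fst) (t := IMs p) (fun x hx => by
      rw [IMs, mem_coe, mem_filter]
      exact ⟨mem_univ _, ((mem_filter.1 (mem_coe.1 hx)).2).1⟩)]
  exact Finset.sum_congr rfl fun t ht => fiber_card (mem_filter.1 ht).2

lemma aNum_eq (p m : ℕ) : aNum p m = ∑ t ∈ IMs p, w p m t := by
  rw [aNum, Nat.card_eq_fintype_card, Fintype.card_subtype, ← matchF_card_formula]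
  rfl


end CoronaAux
end CoronaAux

open Finset CoronaAux in
/-- For a fixed integer `p > 0`, the sequence `(a_{p,m})_{0 ≤ m ≤ p}` is
symmetric and unimodal: `a_{p,m} = a_{p,p-m}` for `0 ≤ m ≤ p`; `a_{p,m-1} ≤ a_{p,m}`
whenever `1 ≤ m` and `2m ≤ p`; and (by symmetry) `a_{p,m} ≥ a_{p,m+1}` whenever
`2m ≥ p` and `m + 1 ≤ p`. -/
theorem aNum_symmetric_unimodal (p : ℕ) (hp : 0 < p) :
    (∀ m : ℕ, m ≤ p → aNum p m = aNum p (p - m)) ∧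
    (∀ m : ℕ, 1 ≤ m → 2 * m ≤ p → aNum p (m - 1) ≤ aNum p m) ∧
    (∀ m : ℕ, p ≤ 2 * m → m + 1 ≤ p → aNum p (m + 1) ≤ aNum p m) := by
  classical
  have key : ∀ m : ℕ, m ≤ p → aNum p m = aNum p (p - m) := by
    intro m hm
    rw [aNum_eq, aNum_eq]
    refine Finset.sum_congr rfl fun t ht => ?_
    have h2 : 2 * t.card ≤ p := two_mul_card_le (mem_filter.1 ht).2
    rw [w, w]
    split_ifs with ha hb hb
    · have hk : m - t.card ≤ p - 2 * t.card := by omega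
      rw [← Nat.choose_symm hk]
      congr 1
      omega
    · exact Nat.choose_eq_zero_of_lt (by omega)
    · exact (Nat.choose_eq_zero_of_lt (by omega)).symm
    · rfl
  have mono : ∀ m : ℕ, 1 ≤ m → 2 * m ≤ p → aNum p (m - 1) ≤ aNum p m := by
    intro m h1 h2
    rw [aNum_eq, aNum_eq]
    refine Finset.sum_le_sum fun t ht => ?_
    have hj : 2 * t.card ≤ p := two_mul_card_le (mem_filter.1 ht).2
    rw [w, w]
    split_ifs with ha hb hb
    · have hmj : m - t.card = (m - 1 - t.card) + 1 := by omega
      rw [hmj]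
      exact Nat.choose_le_succ_of_lt_half_left (by omega)
    · omega
    · exact Nat.zero_le _
    · exact Nat.zero_le _
  refine ⟨key, mono, fun m hpm hmp => ?_⟩
  rw [key (m + 1) hmp, key m (by omega), show p - (m + 1) = (p - m) - 1 by omega]
  exact mono (p - m) (by omega) (by omega)
end
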